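/- arXiv:1602.06042 — 6 statements merged into one kernel-verified Lean document; each statement's English description precedes it below -/
import Mathlib

section
/- Let z ∈ ℝ^p and let i_1, …, i_m be a greedy selection for z, with B_m = G_{i_1} ∪ ⋯ ∪ G_{i_m}. Then for every k ≥ 1 and every A ⊆ {1, …, M} with |A| ≤ k, Σ_{i ∈ B_m} z_i² ≥ (1 − e^{−m/k}) · Σ_{i ∈ ∪_{j∈A} G_j} z_i². -/
open Finset

noncomputable section

/-- The restriction of a vector to a coordinate set: agrees with `z` on `S`, zero off `S`. -/
def restrict {p : ℕ} (z : EuclideanSpace ℝ (Fin p)) (S : Finset (Fin p)) :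
    EuclideanSpace ℝ (Fin p) :=
  WithLp.toLp 2 (fun i => if i ∈ S then z i else 0)

open Classical in
/-- The support of a vector, as a finite set. -/
noncomputable def suppF {p : ℕ} (z : EuclideanSpace ℝ (Fin p)) : Finset (Fin p) :=
  Finset.univ.filter (fun i => z i ≠ 0)

/-- `w` is `k`-group-sparse w.r.t. the groups `G`. -/
def GroupSparse {p M : ℕ} (G : Fin M → Finset (Fin p)) (k : ℕ)
    (w : EuclideanSpace ℝ (Fin p)) : Prop :=
  ∃ A : Finset (Fin M), A.card ≤ k ∧ suppF w ⊆ A.biUnion G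

/-- `B_j`: the union of the first `j` selected groups. -/
def partialUnion {p M m : ℕ} (G : Fin M → Finset (Fin p)) (idx : Fin m → Fin M) (j : ℕ) :
    Finset (Fin p) :=
  (Finset.univ.filter (fun t : Fin m => (t : ℕ) < j)).biUnion (fun t => G (idx t))

/-- `idx` is a greedy selection for `z` (Algorithm 2 of the paper): at each step `j`,
the selected group maximizes the norm of `z` restricted to the yet-uncovered part. -/
def IsGreedySelection {p M m : ℕ} (G : Fin M → Finset (Fin p))
    (z : EuclideanSpace ℝ (Fin p)) (idx : Fin m → Fin M) : Prop :=
  ∀ j : Fin m, ∀ ℓ : Fin M,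
    ‖restrict z (G ℓ \ partialUnion G idx (j : ℕ))‖ ≤
      ‖restrict z (G (idx j) \ partialUnion G idx (j : ℕ))‖

/-- `w` is an exact projection of `z` onto `k`-group-sparse vectors. -/
def IsExactProj {p M : ℕ} (G : Fin M → Finset (Fin p)) (k : ℕ)
    (z w : EuclideanSpace ℝ (Fin p)) : Prop :=
  GroupSparse G k w ∧ ∀ w', GroupSparse G k w' → ‖w - z‖ ≤ ‖w' - z‖

/-- `f` satisfies restricted strong convexity / smoothness of order `k'`
with constants `α ≤ L`. -/
def RSCRSS {p M : ℕ} (G : Fin M → Finset (Fin p)) (k' : ℕ) (α L : ℝ)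
    (f : EuclideanSpace ℝ (Fin p) → ℝ) : Prop :=
  ContDiff ℝ 2 f ∧
  ∀ w : EuclideanSpace ℝ (Fin p), GroupSparse G k' w →
    ∀ v : EuclideanSpace ℝ (Fin p),
      α * ‖v‖ ^ 2 ≤ iteratedFDeriv ℝ 2 f w ![v, v] ∧
      iteratedFDeriv ℝ 2 f w ![v, v] ≤ L * ‖v‖ ^ 2

lemma norm_restrict_sq {p : ℕ} (z : EuclideanSpace ℝ (Fin p)) (S : Finset (Fin p)) :
    ‖restrict z S‖ ^ 2 = ∑ i ∈ S, (z i) ^ 2 := by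
  rw [EuclideanSpace.norm_eq, Real.sq_sqrt (by positivity)]
  rw [show S = Finset.univ.filter (· ∈ S) by simp, Finset.sum_filter]
  apply Finset.sum_congr rfl
  intro i _
  by_cases h : i ∈ S <;> simp [_root_.restrict, h, Real.norm_eq_abs, sq_abs]

lemma sum_sq_union_le {α : Type*} [DecidableEq α] (s t : Finset α) (g : α → ℝ)
    (hg : ∀ a, 0 ≤ g a) : ∑ x ∈ s ∪ t, g x ≤ ∑ x ∈ s, g x + ∑ x ∈ t, g x := by
  rw [← Finset.union_sdiff_self_eq_union, Finset.sum_union Finset.disjoint_sdiff]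
  exact add_le_add_right
    (Finset.sum_le_sum_of_subset_of_nonneg Finset.sdiff_subset fun i _ _ => hg i) _

lemma sum_sq_biUnion_le {ι α : Type*} [DecidableEq ι] [DecidableEq α]
    (A : Finset ι) (f : ι → Finset α) (g : α → ℝ) (hg : ∀ a, 0 ≤ g a) :
    ∑ x ∈ A.biUnion f, g x ≤ ∑ ℓ ∈ A, ∑ x ∈ f ℓ, g x := by
  induction A using Finset.induction_on with
  | empty => simp
  | insert _ _ ha ih =>
    rw [Finset.biUnion_insert, Finset.sum_insert ha]
    exact (sum_sq_union_le _ _ g hg).trans (by gcongr)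

/-- guarantee of the greedy selection: with `B_m = G_{i_1} ∪ ⋯ ∪ G_{i_m}`,
for every `k ≥ 1` and every `A` with `|A| ≤ k`,
`Σ_{i ∈ B_m} z_i² ≥ (1 − e^{−m/k}) Σ_{i ∈ ∪_{j∈A} G_j} z_i²`. -/
theorem stmt_1 (p M m : ℕ) (hp : 1 ≤ p) (hM : 1 ≤ M)
    (G : Fin M → Finset (Fin p)) (hcov : ∀ i : Fin p, ∃ j : Fin M, i ∈ G j)
    (z : EuclideanSpace ℝ (Fin p)) (idx : Fin m → Fin M)
    (hgreedy : IsGreedySelection G z idx)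
    (k : ℕ) (hk : 1 ≤ k) (A : Finset (Fin M)) (hA : A.card ≤ k) :
    (1 - Real.exp (-(m : ℝ) / (k : ℝ))) * ∑ i ∈ A.biUnion G, (z i) ^ 2 ≤
      ∑ i ∈ partialUnion G idx m, (z i) ^ 2 := by
  classical
  set s : Finset (Fin p) → ℝ := fun S => ∑ i ∈ S, (z i) ^ 2 with hs
  have hsnn : ∀ S, 0 ≤ s S := fun S => Finset.sum_nonneg fun i _ => sq_nonneg _
  have hsmono : ∀ S T : Finset (Fin p), S ⊆ T → s S ≤ s T := fun S T h =>
    Finset.sum_le_sum_of_subset_of_nonneg h fun i _ _ => sq_nonneg _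
  set T : Finset (Fin p) := A.biUnion G with hT
  set B : ℕ → Finset (Fin p) := fun j => partialUnion G idx j with hB
  have hB0 : B 0 = ∅ := by
    simp [hB, partialUnion]
  have hBsucc : ∀ (j : ℕ) (hj : j < m), B (j + 1) = B j ∪ G (idx ⟨j, hj⟩) := by
    intro j hj
    have hfil : Finset.univ.filter (fun t : Fin m => (t : ℕ) < j + 1) =
        insert ⟨j, hj⟩ (Finset.univ.filter (fun t : Fin m => (t : ℕ) < j)) := by
      ext t
      simp only [Finset.mem_filter, Finset.mem_insert, Finset.mem_univ, true_and,
        Fin.ext_iff]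
      omega
    simp only [hB, partialUnion, hfil, Finset.biUnion_insert]
    exact Finset.union_comm _ _
  -- step equality
  have hstep : ∀ (j : ℕ) (hj : j < m),
      s (B (j + 1)) = s (B j) + s (G (idx ⟨j, hj⟩) \ B j) := by
    intro j hj
    rw [hBsucc j hj, show B j ∪ G (idx ⟨j, hj⟩) = B j ∪ (G (idx ⟨j, hj⟩) \ B j) from
      (Finset.union_sdiff_self_eq_union).symm]
    exact Finset.sum_union Finset.disjoint_sdiff
  -- greedy gain bound
  have hgain : ∀ (j : ℕ) (hj : j < m),
      s T - s (B j) ≤ (k : ℝ) * s (G (idx ⟨j, hj⟩) \ B j) := by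
    intro j hj
    have h1 : s T - s (B j) ≤ s (T \ B j) := by
      have : s T ≤ s (T \ B j) + s (B j) := by
        have := sum_sq_union_le (T \ B j) (B j) (fun i => (z i) ^ 2)
          (fun i => sq_nonneg _)
        refine le_trans (hsmono _ _ ?_) this
        intro x hx
        by_cases hxB : x ∈ B j
        · exact Finset.mem_union_right _ hxB
        · exact Finset.mem_union_left _ (Finset.mem_sdiff.mpr ⟨hx, hxB⟩)
      linarith
    have h2 : s (T \ B j) ≤ ∑ ℓ ∈ A, s (G ℓ \ B j) := by
      refine le_trans (hsmono _ _ ?_)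
        (sum_sq_biUnion_le A (fun ℓ => G ℓ \ B j) _ fun i => sq_nonneg _)
      intro x hx
      rcases Finset.mem_sdiff.mp hx with ⟨hxT, hxB⟩
      rcases Finset.mem_biUnion.mp hxT with ⟨ℓ, hℓ, hxℓ⟩
      exact Finset.mem_biUnion.mpr ⟨ℓ, hℓ, Finset.mem_sdiff.mpr ⟨hxℓ, hxB⟩⟩
    have h3 : ∀ ℓ : Fin M, s (G ℓ \ B j) ≤ s (G (idx ⟨j, hj⟩) \ B j) := by
      intro ℓ
      have := hgreedy ⟨j, hj⟩ ℓ
      have hsq := pow_le_pow_left₀ (norm_nonneg _) this 2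
      rwa [norm_restrict_sq, norm_restrict_sq] at hsq
    have h4 : ∑ ℓ ∈ A, s (G ℓ \ B j) ≤ (A.card : ℝ) * s (G (idx ⟨j, hj⟩) \ B j) := by
      calc ∑ ℓ ∈ A, s (G ℓ \ B j) ≤ ∑ _ℓ ∈ A, s (G (idx ⟨j, hj⟩) \ B j) :=
            Finset.sum_le_sum fun ℓ _ => h3 ℓ
        _ = (A.card : ℝ) * s (G (idx ⟨j, hj⟩) \ B j) := by
            rw [Finset.sum_const, nsmul_eq_mul]
    have h5 : (A.card : ℝ) * s (G (idx ⟨j, hj⟩) \ B j) ≤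
        (k : ℝ) * s (G (idx ⟨j, hj⟩) \ B j) := by
      apply mul_le_mul_of_nonneg_right _ (hsnn _)
      exact_mod_cast hA
    linarith
  have hkpos : (0 : ℝ) < (k : ℝ) := by exact_mod_cast hk
  have hfac : (0 : ℝ) ≤ 1 - 1 / (k : ℝ) := by
    have : 1 / (k : ℝ) ≤ 1 := by
      rw [div_le_one hkpos]; exact_mod_cast hk
    linarith
  -- main induction
  have key : ∀ j, j ≤ m → s T - s (B j) ≤ (1 - 1 / (k : ℝ)) ^ j * s T := by
    intro j
    induction j with
    | zero =>
      intro _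
      simp [hB0, hs]
    | succ j ih =>
      intro hj1
      have hj : j < m := Nat.lt_of_succ_le hj1
      have IH := ih (le_of_lt hj)
      have hg0 : 0 ≤ s (G (idx ⟨j, hj⟩) \ B j) := hsnn _
      have hstepj := hstep j hj
      rcases le_or_gt (s T - s (B j)) 0 with hneg | hpos
      · have : s T - s (B (j + 1)) ≤ 0 := by linarith
        have hrhs : 0 ≤ (1 - 1 / (k : ℝ)) ^ (j + 1) * s T :=
          mul_nonneg (pow_nonneg hfac _) (hsnn T)
        linarith
      · have hg := hgain j hj
        have hgk : (s T - s (B j)) / (k : ℝ) ≤ s (G (idx ⟨j, hj⟩) \ B j) :=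
          (div_le_iff₀ hkpos).mpr (by linarith [hg])
        have : s T - s (B (j + 1)) ≤ (s T - s (B j)) * (1 - 1 / (k : ℝ)) := by
          rw [hstepj]
          have : (s T - s (B j)) * (1 - 1 / (k : ℝ)) =
              (s T - s (B j)) - (s T - s (B j)) / (k : ℝ) := by ring
          rw [this]
          linarith
        calc s T - s (B (j + 1)) ≤ (s T - s (B j)) * (1 - 1 / (k : ℝ)) := this
          _ ≤ ((1 - 1 / (k : ℝ)) ^ j * s T) * (1 - 1 / (k : ℝ)) :=
              mul_le_mul_of_nonneg_right IH hfac
          _ = (1 - 1 / (k : ℝ)) ^ (j + 1) * s T := by ring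
  have hfinal := key m le_rfl
  -- (1 - 1/k)^m ≤ exp (-m/k)
  have hexp1 : 1 - 1 / (k : ℝ) ≤ Real.exp (-(1 / (k : ℝ))) := by
    have := Real.add_one_le_exp (-(1 / (k : ℝ)))
    linarith
  have hexpm : (1 - 1 / (k : ℝ)) ^ m ≤ Real.exp (-(m : ℝ) / (k : ℝ)) := by
    calc (1 - 1 / (k : ℝ)) ^ m ≤ (Real.exp (-(1 / (k : ℝ)))) ^ m :=
          pow_le_pow_left₀ hfac hexp1 m
      _ = Real.exp ((m : ℕ) * (-(1 / (k : ℝ)))) := by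
          rw [← Real.exp_nat_mul]
      _ = Real.exp (-(m : ℝ) / (k : ℝ)) := by
          congr 1; ring
  have : s T - s (B m) ≤ Real.exp (-(m : ℝ) / (k : ℝ)) * s T :=
    hfinal.trans (mul_le_mul_of_nonneg_right hexpm (hsnn T))
  have hgoal : (1 - Real.exp (-(m : ℝ) / (k : ℝ))) * s T ≤ s (B m) := by nlinarith
  exact hgoal
end
end

section
/- Let g ∈ ℝ^p, let k̃, k ≥ 1, let i_1, …, i_{k̃} be a greedy selection for g and û = g_{B_{k̃}} the corresponding greedy projection of g with parameter k̃, and let u* = P_k^𝒢(g) be an exact projection of g onto k-group-sparse vectors. Then ‖û − g‖² ≤ e^{−k̃/k} ‖g_{supp(u*)}‖² + ‖u* − g‖². -/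
open Finset

noncomputable section

section Aux

lemma norm_sq_eq_sum' {p : ℕ} (x : EuclideanSpace ℝ (Fin p)) :
    ‖x‖ ^ 2 = ∑ i, (x i) ^ 2 := by
  rw [EuclideanSpace.norm_eq, Real.sq_sqrt (by positivity)]
  simp [sq_abs]

lemma sum_biUnion_le' {α β : Type*} [DecidableEq β] (A : Finset α) (t : α → Finset β)
    (f : β → ℝ) (hf : ∀ b, 0 ≤ f b) :
    ∑ b ∈ A.biUnion t, f b ≤ ∑ a ∈ A, ∑ b ∈ t a, f b := by
  classical
  induction A using Finset.induction_on with
  | empty => simp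
  | @insert a A hx ih =>
    rw [Finset.biUnion_insert, Finset.sum_insert hx]
    calc ∑ b ∈ t a ∪ A.biUnion t, f b
        ≤ ∑ b ∈ t a, f b + ∑ b ∈ A.biUnion t, f b := by
          rw [← Finset.sum_union_inter]
          have : 0 ≤ ∑ b ∈ t a ∩ A.biUnion t, f b := Finset.sum_nonneg fun b _ => hf b
          linarith
      _ ≤ ∑ b ∈ t a, f b + ∑ a ∈ A, ∑ b ∈ t a, f b := by linarith [ih]

end Aux

/-- Lemma 1 of the paper: if `û = g_{B_k̃}` is the greedy projection of `g`
with parameter `k̃` and `u* = P_k^𝒢(g)` is an exact projection onto `k`-group-sparse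
vectors, then `‖û − g‖² ≤ e^{−k̃/k} ‖g_{supp(u*)}‖² + ‖u* − g‖²`. -/
theorem stmt_2 (p M : ℕ) (hp : 1 ≤ p) (hM : 1 ≤ M)
    (G : Fin M → Finset (Fin p)) (hcov : ∀ i : Fin p, ∃ j : Fin M, i ∈ G j)
    (g : EuclideanSpace ℝ (Fin p))
    (ktil k : ℕ) (hktil : 1 ≤ ktil) (hk : 1 ≤ k)
    (idx : Fin ktil → Fin M) (hgreedy : IsGreedySelection G g idx)
    (uhat : EuclideanSpace ℝ (Fin p)) (huhat : uhat = restrict g (partialUnion G idx ktil))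
    (ustar : EuclideanSpace ℝ (Fin p)) (hustar : IsExactProj G k g ustar) :
    ‖uhat - g‖ ^ 2 ≤
      Real.exp (-(ktil : ℝ) / (k : ℝ)) * ‖restrict g (suppF ustar)‖ ^ 2 + ‖ustar - g‖ ^ 2 := by

  classical
  -- Notation
  set B : ℕ → Finset (Fin p) := partialUnion G idx with hB
  set S : Finset (Fin p) := suppF ustar with hS
  set N : Finset (Fin p) → ℝ := fun T => ∑ i ∈ T, (g i) ^ 2 with hNdef
  have hNnonneg : ∀ T, 0 ≤ N T := fun T => Finset.sum_nonneg fun i _ => sq_nonneg _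
  have hNmono : ∀ T T' : Finset (Fin p), T ⊆ T' → N T ≤ N T' := fun T T' h =>
    Finset.sum_le_sum_of_subset_of_nonneg h (fun i _ _ => sq_nonneg _)
  have hNsdiff : ∀ T T' : Finset (Fin p), T ⊆ T' → N (T' \ T) + N T = N T' := fun T T' h =>
    Finset.sum_sdiff h
  have hrestrict : ∀ T, ‖restrict g T‖ ^ 2 = N T := by
    intro T
    rw [norm_sq_eq_sum']
    have : ∀ i : Fin p, (restrict g T i) ^ 2 = if i ∈ T then (g i) ^ 2 else 0 := by
      intro i; by_cases h : i ∈ T <;> simp [_root_.restrict, h]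
    simp_rw [this, Finset.sum_ite_mem, Finset.univ_inter]
    rfl
  have hkpos : (0:ℝ) < (k:ℝ) := by exact_mod_cast hk
  set c : ℝ := 1 - 1/(k:ℝ) with hc
  have hc0 : 0 ≤ c := by
    have : 1/(k:ℝ) ≤ 1 := by
      rw [div_le_one hkpos]; exact_mod_cast hk
    simp only [hc]; linarith
  set C : ℝ := N (Finset.univ \ S) with hCdef
  -- greedy step in terms of N
  have hgreedy' : ∀ (j : Fin ktil) (ℓ : Fin M),
      N (G ℓ \ B (j:ℕ)) ≤ N (G (idx j) \ B (j:ℕ)) := by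
    intro j ℓ
    have h := hgreedy j ℓ
    have := pow_le_pow_left₀ (norm_nonneg _) h 2
    rwa [hrestrict, hrestrict] at this
  -- covering
  obtain ⟨⟨A, hAcard, hAsub⟩, hopt⟩ := hustar
  have hcover : ∀ j : Fin ktil, N (S \ B (j:ℕ)) ≤ (k:ℝ) * N (G (idx j) \ B (j:ℕ)) := by
    intro j
    have h1 : S \ B (j:ℕ) ⊆ A.biUnion (fun ℓ => G ℓ \ B (j:ℕ)) := by
      intro i hi
      rw [Finset.mem_sdiff] at hi
      obtain ⟨ℓ, hℓA, hℓ⟩ := Finset.mem_biUnion.mp (hAsub hi.1)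
      exact Finset.mem_biUnion.mpr ⟨ℓ, hℓA, Finset.mem_sdiff.mpr ⟨hℓ, hi.2⟩⟩
    calc N (S \ B (j:ℕ)) ≤ N (A.biUnion (fun ℓ => G ℓ \ B (j:ℕ))) := hNmono _ _ h1
      _ ≤ ∑ ℓ ∈ A, N (G ℓ \ B (j:ℕ)) :=
          sum_biUnion_le' A _ _ (fun b => sq_nonneg _)
      _ ≤ ∑ _ℓ ∈ A, N (G (idx j) \ B (j:ℕ)) :=
          Finset.sum_le_sum (fun ℓ _ => hgreedy' j ℓ)
      _ = (A.card : ℝ) * N (G (idx j) \ B (j:ℕ)) := by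
          rw [Finset.sum_const, nsmul_eq_mul]
      _ ≤ (k:ℝ) * N (G (idx j) \ B (j:ℕ)) := by
          have : (A.card : ℝ) ≤ (k:ℝ) := by exact_mod_cast hAcard
          exact mul_le_mul_of_nonneg_right this (hNnonneg _)
  -- B recursion
  have hBstep : ∀ (j : ℕ) (hj : j < ktil), B (j+1) = B j ∪ G (idx ⟨j, hj⟩) := by
    intro j hj
    ext i
    simp only [hB, partialUnion, Finset.mem_biUnion, Finset.mem_filter, Finset.mem_univ,
      true_and, Finset.mem_union]
    constructor
    · rintro ⟨t, ht, hi⟩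
      rcases Nat.lt_succ_iff_lt_or_eq.mp ht with h | h
      · exact Or.inl ⟨t, h, hi⟩
      · right; convert hi using 3; exact (Fin.ext h.symm)
    · rintro (⟨t, ht, hi⟩ | hi)
      · exact ⟨t, Nat.lt_succ_of_lt ht, hi⟩
      · exact ⟨⟨j, hj⟩, Nat.lt_succ_self j, hi⟩
  -- main dissipation inequality
  have hkey : ∀ (j : ℕ), j < ktil →
      N (Finset.univ \ B (j+1)) - C ≤ c * (N (Finset.univ \ B j) - C) := by
    intro j hj
    set jj : Fin ktil := ⟨j, hj⟩ with hjj
    set d : ℝ := N (G (idx jj) \ B j) with hd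
    have hsub1 : G (idx jj) \ B j ⊆ Finset.univ \ B j := by
      intro i hi
      rw [Finset.mem_sdiff] at hi ⊢
      exact ⟨Finset.mem_univ i, hi.2⟩
    have hset : (Finset.univ \ B j) \ (G (idx jj) \ B j) = Finset.univ \ B (j+1) := by
      rw [hBstep j hj]
      ext i
      simp only [Finset.mem_sdiff, Finset.mem_univ, true_and, Finset.mem_union, not_or]
      tauto
    have hrec : N (Finset.univ \ B (j+1)) + d = N (Finset.univ \ B j) := by
      rw [← hset]
      exact hNsdiff _ _ hsub1
    have hub : N (Finset.univ \ B j) ≤ N (S \ B j) + C := by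
      have hsub2 : Finset.univ \ B j ⊆ (S \ B j) ∪ (Finset.univ \ S) := by
        intro i hi
        rw [Finset.mem_sdiff] at hi
        by_cases hiS : i ∈ S
        · exact Finset.mem_union_left _ (Finset.mem_sdiff.mpr ⟨hiS, hi.2⟩)
        · exact Finset.mem_union_right _ (Finset.mem_sdiff.mpr ⟨Finset.mem_univ i, hiS⟩)
      calc N (Finset.univ \ B j) ≤ N ((S \ B j) ∪ (Finset.univ \ S)) := hNmono _ _ hsub2
        _ ≤ N (S \ B j) + C := by
            have := Finset.sum_union_inter (s₁ := S \ B j) (s₂ := Finset.univ \ S)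
              (f := fun i => (g i)^2)
            have h0 : 0 ≤ N ((S \ B j) ∩ (Finset.univ \ S)) := hNnonneg _
            simp only [hNdef, hCdef] at *
            linarith
    have hdlb : (N (Finset.univ \ B j) - C) / (k:ℝ) ≤ d := by
      rw [div_le_iff₀ hkpos]
      have h1 := hcover jj
      have : (jj : ℕ) = j := rfl
      rw [this] at h1
      nlinarith [h1, hub]
    have hexpand : c * (N (Finset.univ \ B j) - C) =
        (N (Finset.univ \ B j) - C) - (N (Finset.univ \ B j) - C) / (k:ℝ) := by
      rw [hc]
      ring
    rw [hexpand]
    linarith [hrec, hdlb]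
  -- induction
  have hind : ∀ j : ℕ, j ≤ ktil → N (Finset.univ \ B j) - C ≤ c ^ j * N S := by
    intro j
    induction j with
    | zero =>
      intro _
      have hB0 : B 0 = ∅ := by
        simp [hB, partialUnion]
      have : N (Finset.univ \ S) + N S = N Finset.univ :=
        hNsdiff S Finset.univ (Finset.subset_univ S)
      rw [hB0]
      simp only [Finset.sdiff_empty, pow_zero, one_mul]
      linarith
    | succ j ih =>
      intro hj
      have hjlt : j < ktil := hj
      have h1 := hkey j hjlt
      have h2 := ih (le_of_lt hjlt)
      calc N (Finset.univ \ B (j+1)) - C ≤ c * (N (Finset.univ \ B j) - C) := h1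
        _ ≤ c * (c ^ j * N S) := mul_le_mul_of_nonneg_left h2 hc0
        _ = c ^ (j+1) * N S := by ring
  -- exp bound
  have hexp : c ^ ktil ≤ Real.exp (-(ktil:ℝ)/(k:ℝ)) := by
    have h1 : c ≤ Real.exp (-(1/(k:ℝ))) := by
      have := Real.add_one_le_exp (-(1/(k:ℝ)))
      simp only [hc]; linarith
    calc c ^ ktil ≤ (Real.exp (-(1/(k:ℝ)))) ^ ktil := pow_le_pow_left₀ hc0 h1 ktil
      _ = Real.exp ((ktil:ℕ) * (-(1/(k:ℝ)))) := (Real.exp_nat_mul _ ktil).symm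
      _ = Real.exp (-(ktil:ℝ)/(k:ℝ)) := by
          congr 1
          field_simp
  -- ‖uhat - g‖² = N(univ \ B ktil)
  have h1 : ‖uhat - g‖ ^ 2 = N (Finset.univ \ B ktil) := by
    subst huhat
    rw [norm_sq_eq_sum']
    have : ∀ i : Fin p, ((restrict g (partialUnion G idx ktil) - g) i) ^ 2 =
        if i ∈ Finset.univ \ B ktil then (g i) ^ 2 else 0 := by
      intro i
      have hi : (restrict g (partialUnion G idx ktil) - g) i =
          restrict g (partialUnion G idx ktil) i - g i := rfl
      by_cases h : i ∈ B ktil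
      · have h' : i ∈ partialUnion G idx ktil := h
        simp [hi, _root_.restrict, h', h]
      · have h' : i ∉ partialUnion G idx ktil := h
        simp [hi, _root_.restrict, h', h]
    simp only [hB] at this ⊢
    simp only [this, Finset.sum_ite_mem, Finset.univ_inter]
    rfl
  -- C ≤ ‖ustar - g‖²
  have h2 : C ≤ ‖ustar - g‖ ^ 2 := by
    rw [norm_sq_eq_sum']
    have heq : ∀ i ∈ Finset.univ \ S, (g i) ^ 2 = ((ustar - g) i) ^ 2 := by
      intro i hi
      have : ustar i = 0 := by
        rw [Finset.mem_sdiff] at hi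
        by_contra h
        exact hi.2 (by simp [hS, suppF, h])
      have hsub : (ustar - g) i = ustar i - g i := rfl
      rw [hsub, this]
      ring
    calc C = ∑ i ∈ Finset.univ \ S, ((ustar - g) i) ^ 2 := Finset.sum_congr rfl heq
      _ ≤ ∑ i, ((ustar - g) i) ^ 2 :=
          Finset.sum_le_sum_of_subset_of_nonneg (Finset.sdiff_subset)
            (fun i _ _ => sq_nonneg _)
  -- assemble
  have h3 := hind ktil le_rfl
  have h4 : c ^ ktil * N S ≤ Real.exp (-(ktil:ℝ)/(k:ℝ)) * N S :=
    mul_le_mul_of_nonneg_right hexp (hNnonneg S)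
  rw [h1, hrestrict]
  linarith
end
end

section
/- Let g ∈ ℝ^p, let i_1, …, i_k be a greedy selection for g with greedy projection ŵ = g_{B_k}, and let S = supp(ŵ). Then for every I ⊆ {1, …, p} with S ⊆ I, the same sequence i_1, …, i_k is a greedy selection for the restricted vector g_I, and the greedy projection of g_I with parameter k equals ŵ. -/
open Finset

noncomputable section

lemma norm_le_of_abs_le {p : ℕ} (x y : EuclideanSpace ℝ (Fin p))
    (h : ∀ i, |x i| ≤ |y i|) : ‖x‖ ≤ ‖y‖ := by
  rw [EuclideanSpace.norm_eq, EuclideanSpace.norm_eq]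
  apply Real.sqrt_le_sqrt
  apply Finset.sum_le_sum
  intro i _
  rw [Real.norm_eq_abs, Real.norm_eq_abs]
  exact pow_le_pow_left₀ (abs_nonneg _) (h i) 2

/-- Lemma `subset` of the paper: if `ŵ = g_{B_k}` is the greedy projection
of `g` with support `S`, then for every `I ⊇ S`, the same index sequence is a greedy
selection for `g_I` and the greedy projection of `g_I` with parameter `k` equals `ŵ`. -/
theorem stmt_4 (p M : ℕ) (hp : 1 ≤ p) (hM : 1 ≤ M)
    (G : Fin M → Finset (Fin p)) (hcov : ∀ i : Fin p, ∃ j : Fin M, i ∈ G j)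
    (g : EuclideanSpace ℝ (Fin p))
    (k : ℕ) (idx : Fin k → Fin M) (hgreedy : IsGreedySelection G g idx)
    (what : EuclideanSpace ℝ (Fin p)) (hwhat : what = restrict g (partialUnion G idx k))
    (I : Finset (Fin p)) (hI : suppF what ⊆ I) :
    IsGreedySelection G (restrict g I) idx ∧
      restrict (restrict g I) (partialUnion G idx k) = what := by
  -- key: on B_k, nonzero coordinates of g are in I
  have key : ∀ i : Fin p, i ∈ partialUnion G idx k → g i ≠ 0 → i ∈ I := by
    intro i hiB hg
    apply hI
    simp only [suppF, Finset.mem_filter, Finset.mem_univ, true_and, hwhat, _root_.restrict, PiLp.toLp_apply, if_pos hiB]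
    exact hg
  have hsub : ∀ j : Fin k, G (idx j) \ partialUnion G idx (j : ℕ) ⊆ partialUnion G idx k := by
    intro j i hi
    simp only [partialUnion, Finset.mem_biUnion, Finset.mem_filter, Finset.mem_univ, true_and]
    exact ⟨j, j.isLt, (Finset.mem_sdiff.mp hi).1⟩
  have heq : ∀ A : Finset (Fin p), A ⊆ partialUnion G idx k →
      restrict (restrict g I) A = restrict g A := by
    intro A hA
    ext i
    simp only [_root_.restrict, PiLp.toLp_apply]
    by_cases hiA : i ∈ A
    · simp only [if_pos hiA]
      by_cases hg : g i = 0
      · simp [hg]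
      · rw [if_pos (key i (hA hiA) hg)]
    · simp [hiA]
  constructor
  · intro j ℓ
    calc ‖restrict (restrict g I) (G ℓ \ partialUnion G idx (j : ℕ))‖
        ≤ ‖restrict g (G ℓ \ partialUnion G idx (j : ℕ))‖ := by
          apply norm_le_of_abs_le
          intro i
          simp only [_root_.restrict, PiLp.toLp_apply]
          by_cases hi : i ∈ G ℓ \ partialUnion G idx (j : ℕ)
          · simp only [if_pos hi]
            by_cases hiI : i ∈ I
            · simp [hiI]
            · simp [hiI]
          · simp [hi]
      _ ≤ ‖restrict g (G (idx j) \ partialUnion G idx (j : ℕ))‖ := hgreedy j ℓ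
      _ = ‖restrict (restrict g I) (G (idx j) \ partialUnion G idx (j : ℕ))‖ := by
          rw [heq _ (hsub j)]
  · rw [heq _ (le_refl _), hwhat]
end
end

section
/- Let z ∈ ℝ^p and let 1 ≤ k* ≤ k ≤ M with k* < M. Let ŵ = P_k^𝒢(z) and w* = P_{k*}^𝒢(z) be exact projections of z onto k-group-sparse and k*-group-sparse vectors respectively. Then ‖ŵ − z‖² ≤ ((M − k)/(M − k*)) · ‖w* − z‖². -/
open Finset

noncomputable section

lemma normsq_eq {p : ℕ} (v : EuclideanSpace ℝ (Fin p)) : ‖v‖ ^ 2 = ∑ i, (v i) ^ 2 := by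
  rw [EuclideanSpace.norm_eq, Real.sq_sqrt (by positivity)]
  simp [sq_abs]

lemma suppF_restrict {p : ℕ} (z : EuclideanSpace ℝ (Fin p)) (S : Finset (Fin p)) :
    suppF (restrict z S) ⊆ S := by
  intro i hi
  simp only [suppF, mem_filter, mem_univ, true_and] at hi
  by_contra h
  exact hi (by simp [_root_.restrict, h])

lemma normsq_restrict_sub {p : ℕ} (z : EuclideanSpace ℝ (Fin p)) (S : Finset (Fin p)) :
    ‖restrict z S - z‖ ^ 2 = ∑ i ∈ univ.filter (fun i => i ∉ S), (z i) ^ 2 := by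
  rw [normsq_eq, ← Finset.sum_filter_add_sum_filter_not univ (fun i => i ∉ S)]
  have h1 : ∀ i ∈ univ.filter (fun i => i ∉ S), ((restrict z S - z) i) ^ 2 = (z i) ^ 2 := by
    intro i hi
    simp only [mem_filter] at hi
    simp [_root_.restrict, hi.2, neg_sq]
  have h2 : ∀ i ∈ univ.filter (fun i : Fin p => ¬ i ∉ S), ((restrict z S - z) i) ^ 2 = 0 := by
    intro i hi
    simp only [mem_filter, not_not] at hi
    simp [_root_.restrict, hi.2]
  rw [Finset.sum_congr rfl h1, Finset.sum_eq_zero h2, add_zero]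

lemma normsq_lower {p : ℕ} (z w : EuclideanSpace ℝ (Fin p)) (B : Finset (Fin p))
    (hs : suppF w ⊆ B) :
    ∑ i ∈ univ.filter (fun i => i ∉ B), (z i) ^ 2 ≤ ‖w - z‖ ^ 2 := by
  rw [normsq_eq]
  have : ∑ i ∈ univ.filter (fun i => i ∉ B), (z i) ^ 2
      = ∑ i ∈ univ.filter (fun i => i ∉ B), ((w - z) i) ^ 2 := by
    refine Finset.sum_congr rfl fun i hi => ?_
    simp only [mem_filter] at hi
    have hwi : w i = 0 := by
      by_contra h
      exact hi.2 (hs (by simp [suppF, h]))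
    simp [hwi, neg_sq]
  rw [this]
  exact Finset.sum_le_sum_of_subset_of_nonneg (filter_subset _ _) (fun i _ _ => by positivity)

lemma select_top {M : ℕ} (m : Fin M → ℝ) (hm : ∀ j, 0 ≤ m j)
    (C : Finset (Fin M)) : ∀ t : ℕ, t ≤ C.card →
    ∃ T, T ⊆ C ∧ T.card = t ∧ (t : ℝ) * ∑ j ∈ C, m j ≤ (C.card : ℝ) * ∑ j ∈ T, m j := by
  intro t
  induction t with
  | zero =>
    intro _
    exact ⟨∅, empty_subset _, rfl, by simp⟩
  | succ t ih =>
    intro ht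
    obtain ⟨T, hTC, hTcard, hTsum⟩ := ih (Nat.le_of_succ_le ht)
    have hne : (C \ T).Nonempty := by
      rw [← Finset.card_pos, Finset.card_sdiff_of_subset hTC, hTcard]
      omega
    obtain ⟨j, hjCT, hjmax⟩ := Finset.exists_max_image (C \ T) m hne
    have hjC : j ∈ C := (Finset.mem_sdiff.mp hjCT).1
    have hjT : j ∉ T := (Finset.mem_sdiff.mp hjCT).2
    refine ⟨insert j T, Finset.insert_subset hjC hTC, by rw [Finset.card_insert_of_notMem hjT, hTcard], ?_⟩
    rw [Finset.sum_insert hjT]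
    set n : ℝ := (C.card : ℝ) with hn
    set S : ℝ := ∑ i ∈ C, m i with hS
    set s : ℝ := ∑ i ∈ T, m i with hs
    -- average bound: (n - t) * m j ≥ S - s
    have hsd : ∑ i ∈ C \ T, m i = S - s := by
      rw [hS, hs, ← Finset.sum_sdiff hTC]; ring
    have havg : S - s ≤ (n - t) * m j := by
      rw [← hsd]
      calc ∑ i ∈ C \ T, m i ≤ ∑ _i ∈ C \ T, m j := Finset.sum_le_sum (fun i hi => hjmax i hi)
        _ = ((C \ T).card : ℝ) * m j := by rw [Finset.sum_const, nsmul_eq_mul]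
        _ = (n - t) * m j := by
            rw [Finset.card_sdiff_of_subset hTC, hTcard, Nat.cast_sub (le_trans (Nat.le_of_succ_le ht) le_rfl)]
    have hmj : 0 ≤ m j := hm j
    have hnt : (t : ℝ) + 1 ≤ n := by
      rw [hn]; exact_mod_cast ht
    push_cast
    nlinarith [mul_nonneg hmj (sub_nonneg.mpr hnt), mul_le_mul_of_nonneg_right hTsum (sub_nonneg.mpr (by linarith : (t:ℝ) + 1 ≤ n) : (0:ℝ) ≤ n - (t+1)), mul_le_mul_of_nonneg_left havg (by positivity : (0:ℝ) ≤ n)]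


/-- Lemma `ht_large` of the paper: for exact projections `ŵ = P_k^𝒢(z)`
and `w* = P_{k*}^𝒢(z)` with `1 ≤ k* ≤ k ≤ M` and `k* < M`,
`‖ŵ − z‖² ≤ ((M − k)/(M − k*)) ‖w* − z‖²`. -/
theorem stmt_5 (p M : ℕ) (hp : 1 ≤ p) (hM : 1 ≤ M)
    (G : Fin M → Finset (Fin p)) (hcov : ∀ i : Fin p, ∃ j : Fin M, i ∈ G j)
    (z : EuclideanSpace ℝ (Fin p))
    (kstar k : ℕ) (h1 : 1 ≤ kstar) (h2 : kstar ≤ k) (h3 : k ≤ M) (h4 : kstar < M)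
    (what : EuclideanSpace ℝ (Fin p)) (hwhat : IsExactProj G k z what)
    (wstar : EuclideanSpace ℝ (Fin p)) (hwstar : IsExactProj G kstar z wstar) :
    ‖what - z‖ ^ 2 ≤ (((M : ℝ) - (k : ℝ)) / ((M : ℝ) - (kstar : ℝ))) * ‖wstar - z‖ ^ 2 := by
  obtain ⟨⟨A0, hA0card, hA0supp⟩, _⟩ := hwstar
  obtain ⟨_, hwhat_opt⟩ := hwhat
  have hkstar_le : kstar ≤ (univ : Finset (Fin M)).card := by simp [Finset.card_univ]; omega
  obtain ⟨A', hA0A', hA'univ, hA'card⟩ :=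
    Finset.exists_subsuperset_card_eq (Finset.subset_univ A0) hA0card hkstar_le
  set B' : Finset (Fin p) := A'.biUnion G with hB'
  set c : Fin p → Fin M := fun i => (hcov i).choose with hc
  have hcmem : ∀ i, i ∈ G (c i) := fun i => (hcov i).choose_spec
  set N : Finset (Fin p) := univ.filter (fun i => i ∉ B') with hN
  set m : Fin M → ℝ := fun j => ∑ i ∈ N.filter (fun i => c i = j), (z i) ^ 2 with hm
  have hm0 : ∀ j, 0 ≤ m j := fun j => Finset.sum_nonneg (fun i _ => by positivity)
  set C : Finset (Fin M) := univ \ A' with hC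
  have hCcard : C.card = M - kstar := by
    rw [hC, Finset.card_sdiff_of_subset (Finset.subset_univ _), hA'card, Finset.card_univ, Fintype.card_fin]
  have hmaps : ∀ i ∈ N, c i ∈ C := by
    intro i hi
    simp only [hN, Finset.mem_filter] at hi
    simp only [hC, Finset.mem_sdiff, Finset.mem_univ, true_and]
    intro hcA
    exact hi.2 (Finset.mem_biUnion.mpr ⟨c i, hcA, hcmem i⟩)
  have hfib : ∑ j ∈ C, m j = ∑ i ∈ N, (z i) ^ 2 :=
    Finset.sum_fiberwise_of_maps_to hmaps _
  have ht : k - kstar ≤ C.card := by omega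
  obtain ⟨T, hTC, hTcard, hTsum⟩ := select_top m hm0 C (k - kstar) ht
  set Sfin : Finset (Fin M) := A' ∪ T with hSfin
  have hScard : Sfin.card ≤ k :=
    le_trans (Finset.card_union_le _ _) (by rw [hA'card, hTcard]; omega)
  set U : Finset (Fin p) := Sfin.biUnion G with hU
  have hBU : B' ⊆ U := by
    intro i hi
    obtain ⟨j, hjA, hij⟩ := Finset.mem_biUnion.mp hi
    exact Finset.mem_biUnion.mpr ⟨j, Finset.mem_union_left _ hjA, hij⟩
  have hsp : GroupSparse G k (restrict z U) := ⟨Sfin, hScard, suppF_restrict z U⟩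
  have hle : ‖what - z‖ ≤ ‖restrict z U - z‖ := hwhat_opt _ hsp
  have hle2 : ‖what - z‖ ^ 2 ≤ ∑ i ∈ univ.filter (fun i => i ∉ U), (z i) ^ 2 := by
    rw [← normsq_restrict_sub]
    exact pow_le_pow_left₀ (norm_nonneg _) hle 2
  set R' : ℝ := ∑ i ∈ N, (z i) ^ 2 with hR'
  have hTm : ∑ j ∈ T, m j = ∑ i ∈ N.filter (fun i => c i ∈ T), (z i) ^ 2 := by
    rw [← Finset.sum_fiberwise_of_maps_to
      (fun i hi => (Finset.mem_filter.mp hi).2) (fun i => (z i) ^ 2)]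
    refine Finset.sum_congr rfl fun j hj => ?_
    refine Finset.sum_congr ?_ (fun _ _ => rfl)
    ext i
    simp only [Finset.mem_filter]
    constructor
    · rintro ⟨hiN, hci⟩; exact ⟨⟨hiN, hci ▸ hj⟩, hci⟩
    · rintro ⟨⟨hiN, _⟩, hci⟩; exact ⟨hiN, hci⟩
  have hdisj : Disjoint (univ.filter (fun i => i ∉ U)) (N.filter (fun i => c i ∈ T)) := by
    rw [Finset.disjoint_left]
    intro i hiU hiD
    simp only [Finset.mem_filter] at hiU hiD
    exact hiU.2 (Finset.mem_biUnion.mpr ⟨c i, Finset.mem_union_right _ hiD.2, hcmem i⟩)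
  have hsub : (univ.filter (fun i => i ∉ U)) ∪ (N.filter (fun i => c i ∈ T)) ⊆ N := by
    intro i hi
    rcases Finset.mem_union.mp hi with h | h
    · simp only [Finset.mem_filter] at h
      simp only [hN, Finset.mem_filter]
      exact ⟨h.1, fun hB => h.2 (hBU hB)⟩
    · exact Finset.filter_subset _ _ h
  have hkey : ∑ i ∈ univ.filter (fun i => i ∉ U), (z i) ^ 2 + ∑ j ∈ T, m j ≤ R' := by
    rw [hTm, ← Finset.sum_union hdisj]
    exact Finset.sum_le_sum_of_subset_of_nonneg hsub (fun i _ _ => by positivity)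
  have hRw : R' ≤ ‖wstar - z‖ ^ 2 :=
    normsq_lower z wstar B' (hA0supp.trans (by
      intro i hi
      obtain ⟨j, hjA, hij⟩ := Finset.mem_biUnion.mp hi
      exact Finset.mem_biUnion.mpr ⟨j, hA0A' hjA, hij⟩))
  rw [hfib, hCcard, Nat.cast_sub h2, Nat.cast_sub (le_of_lt h4)] at hTsum
  have hMk : (0 : ℝ) < (M : ℝ) - kstar := by
    have : (kstar : ℝ) < M := by exact_mod_cast h4
    linarith
  have hkM : (k : ℝ) ≤ M := by exact_mod_cast h3
  have hW0 : (0 : ℝ) ≤ ‖wstar - z‖ ^ 2 := by positivity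
  rw [div_mul_eq_mul_div, le_div_iff₀ hMk]
  nlinarith [mul_le_mul_of_nonneg_right (le_trans hle2 (by linarith : ∑ i ∈ univ.filter (fun i => i ∉ U), (z i) ^ 2 ≤ R' - ∑ j ∈ T, m j)) hMk.le,
    mul_le_mul_of_nonneg_left hRw (sub_nonneg.mpr hkM)]
end
end

section
/- Suppose f : ℝ^p → ℝ satisfies RSC/RSS of order 2k + k* with constants 0 < α ≤ L, where 1 ≤ k* ≤ k. Let w* be k*-group-sparse with S* = supp(w*), let w_t be k-group-sparse, let g_t = w_t − (1/L)∇f(w_t), and let w_{t+1} = P_k^𝒢(g_t) be an exact projection with S_{t+1} = supp(w_{t+1}). Then ‖w_{t+1} − w*‖ ≤ (1 + √(k*/k)) · [ (1 − α/L)‖w_t − w*‖ + (1/L)‖(∇f(w*))_{S_{t+1} ∪ S*}‖ ]. -/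
open Finset

noncomputable section

namespace IHT
open RealInnerProductSpace
variable {p : ℕ}

def nsq (z : EuclideanSpace ℝ (Fin p)) (S : Finset (Fin p)) : ℝ := ∑ i ∈ S, (z i)^2

lemma nsq_nonneg (z : EuclideanSpace ℝ (Fin p)) (S : Finset (Fin p)) : 0 ≤ nsq z S :=
  Finset.sum_nonneg fun i _ => sq_nonneg _

lemma norm_sq_eq (z : EuclideanSpace ℝ (Fin p)) : ‖z‖^2 = ∑ i, (z i)^2 := by
  rw [EuclideanSpace.norm_eq, Real.sq_sqrt (by positivity)]
  simp [Real.norm_eq_abs, sq_abs]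

lemma norm_restrict_sq (z : EuclideanSpace ℝ (Fin p)) (S : Finset (Fin p)) :
    ‖restrict z S‖^2 = nsq z S := by
  rw [norm_sq_eq, nsq]
  rw [← Finset.sum_filter_add_sum_filter_not Finset.univ (· ∈ S)]
  have h1 : ∀ i ∈ Finset.univ.filter (· ∈ S), (_root_.restrict z S i)^2 = (z i)^2 := by
    intro i hi
    simp only [Finset.mem_filter] at hi
    simp [_root_.restrict, hi.2]
  have h2 : ∀ i ∈ Finset.univ.filter (¬ · ∈ S), (_root_.restrict z S i)^2 = 0 := by
    intro i hi
    simp only [Finset.mem_filter] at hi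
    simp [_root_.restrict, hi.2]
  rw [Finset.sum_congr rfl h1, Finset.sum_congr rfl h2, Finset.sum_const_zero, add_zero,
    Finset.filter_mem_eq_inter, Finset.univ_inter]

lemma nsq_mono (z : EuclideanSpace ℝ (Fin p)) {S T : Finset (Fin p)} (h : S ⊆ T) :
    nsq z S ≤ nsq z T :=
  Finset.sum_le_sum_of_subset_of_nonneg h fun i _ _ => sq_nonneg _

lemma nsq_union {z : EuclideanSpace ℝ (Fin p)} {S T : Finset (Fin p)} (h : Disjoint S T) :
    nsq z (S ∪ T) = nsq z S + nsq z T := by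
  simpa [nsq] using Finset.sum_union h

lemma norm_restrict_le (z : EuclideanSpace ℝ (Fin p)) (S : Finset (Fin p)) :
    ‖restrict z S‖ ≤ ‖z‖ := by
  have h1 : ‖restrict z S‖^2 ≤ ‖z‖^2 := by
    rw [norm_restrict_sq, norm_sq_eq]
    exact Finset.sum_le_sum_of_subset_of_nonneg (Finset.subset_univ S) fun i _ _ => sq_nonneg _
  nlinarith [norm_nonneg (restrict z S), norm_nonneg z]

lemma restrict_sub (x y : EuclideanSpace ℝ (Fin p)) (S : Finset (Fin p)) :
    restrict (x - y) S = restrict x S - restrict y S := by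
  ext i
  have : (x - y) i = x i - y i := rfl
  simp only [_root_.restrict]
  by_cases h : i ∈ S <;> simp [h, this, PiLp.sub_apply, _root_.restrict]

lemma restrict_smul (c : ℝ) (x : EuclideanSpace ℝ (Fin p)) (S : Finset (Fin p)) :
    restrict (c • x) S = c • restrict x S := by
  ext i
  have : (c • x) i = c * x i := rfl
  simp only [_root_.restrict]
  by_cases h : i ∈ S <;> simp [h, this, PiLp.smul_apply, _root_.restrict]

lemma suppF_subset_iff {z : EuclideanSpace ℝ (Fin p)} {S : Finset (Fin p)} :
    suppF z ⊆ S ↔ ∀ i, i ∉ S → z i = 0 := by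
  classical
  constructor
  · intro h i hi
    by_contra hz
    exact hi (h (by simp [suppF, hz]))
  · intro h i hi
    classical
    simp only [suppF, Finset.mem_filter] at hi
    by_contra hS
    exact hi.2 (h i hS)

lemma restrict_eq_self {z : EuclideanSpace ℝ (Fin p)} {S : Finset (Fin p)}
    (h : suppF z ⊆ S) : restrict z S = z := by
  ext i
  simp only [_root_.restrict]
  by_cases hi : i ∈ S
  · simp [hi]
  · simp [hi, (suppF_subset_iff.1 h i hi).symm]


/-- selection of m indices with small total cost -/
lemma select {ι : Type*} [DecidableEq ι] (m : ℕ) :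
    ∀ (A : Finset ι) (c : ι → ℝ), (∀ i ∈ A, 0 ≤ c i) → m ≤ A.card →
    ∃ J ⊆ A, J.card = m ∧ (A.card : ℝ) * ∑ i ∈ J, c i ≤ (m : ℝ) * ∑ i ∈ A, c i := by
  induction m with
  | zero =>
    intro A c hc _
    exact ⟨∅, Finset.empty_subset _, rfl, by simp⟩
  | succ m ih =>
    intro A c hc hm
    have hA : A.Nonempty := Finset.card_pos.1 (lt_of_lt_of_le (Nat.succ_pos m) hm)
    obtain ⟨a, haA, hamin⟩ := A.exists_min_image c hA
    have hKe : (A.erase a).card = A.card - 1 := Finset.card_erase_of_mem haA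
    have hK1 : 1 ≤ A.card := le_trans (Nat.succ_le_succ (Nat.zero_le m)) hm
    have hme : m ≤ (A.erase a).card := by omega
    obtain ⟨J', hJ'sub, hJ'card, hJ'ineq⟩ := ih (A.erase a) c
      (fun i hi => hc i (Finset.erase_subset _ _ hi)) hme
    refine ⟨insert a J', ?_, ?_, ?_⟩
    · exact Finset.insert_subset haA (hJ'sub.trans (Finset.erase_subset _ _))
    · rw [Finset.card_insert_of_notMem (fun h => (Finset.mem_erase.1 (hJ'sub h)).1 rfl), hJ'card]
    · have haJ' : a ∉ J' := fun h => (Finset.mem_erase.1 (hJ'sub h)).1 rfl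
      rw [Finset.sum_insert haJ']
      have hsum_erase : ∑ i ∈ A.erase a, c i = (∑ i ∈ A, c i) - c a := by
        rw [← Finset.add_sum_erase A c haA]; ring
      set K : ℝ := (A.card : ℝ) with hKdef
      have hKcast : ((A.erase a).card : ℝ) = K - 1 := by
        rw [hKe, Nat.cast_sub hK1]; simp [hKdef]
      have hKm : (m : ℝ) + 1 ≤ K := by
        rw [hKdef]; exact_mod_cast hm
      have hca0 : 0 ≤ c a := hc a haA
      have hcamin : K * c a ≤ ∑ i ∈ A, c i := by
        have := Finset.card_nsmul_le_sum A c (c a) (fun i hi => hamin i hi)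
        rw [nsmul_eq_mul] at this; exact this
      have ht0 : 0 ≤ ∑ i ∈ J', c i :=
        Finset.sum_nonneg (fun i hi => hc i ((hJ'sub.trans (Finset.erase_subset _ _)) hi))
      have hIH : (K - 1) * ∑ i ∈ J', c i ≤ (m : ℝ) * ((∑ i ∈ A, c i) - c a) := by
        rw [← hKcast, ← hsum_erase]; exact hJ'ineq
      have hts : ∑ i ∈ J', c i ≤ (∑ i ∈ A, c i) - c a := by
        rw [← hsum_erase]
        exact Finset.sum_le_sum_of_subset_of_nonneg hJ'sub
          (fun i hi _ => hc i (Finset.erase_subset _ _ hi))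
      have hK0 : (0:ℝ) ≤ K := by positivity
      push_cast
      have hK1' : (0:ℝ) ≤ K - 1 := by linarith
      set s : ℝ := ∑ x ∈ A, c x with hs
      set t : ℝ := ∑ x ∈ J', c x with ht
      have h1 : 0 ≤ (K - 1 - m) * (s - K * c a) :=
        mul_nonneg (by linarith) (by linarith)
      have h2 : K * ((K - 1) * t) ≤ K * ((m : ℝ) * (s - c a)) :=
        mul_le_mul_of_nonneg_left hIH hK0
      have key : 0 ≤ (K - 1) * (((m:ℝ) + 1) * s - K * (c a + t)) := by nlinarith [h1, h2]
      rcases eq_or_lt_of_le (by linarith : (1:ℝ) ≤ K) with hKeq | hKgt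
      · have hs0 : 0 ≤ s := by linarith
        have hm0 : (0:ℝ) ≤ (m:ℝ) := Nat.cast_nonneg m
        nlinarith [mul_nonneg hm0 hs0]
      · by_contra hcon
        push_neg at hcon
        nlinarith [mul_pos (by linarith : (0:ℝ) < K - 1) (by linarith : (0:ℝ) < K * (c a + t) - ((m:ℝ)+1) * s)]


local notation "E" => EuclideanSpace ℝ (Fin p)

/-- bilinear bound from quadratic bounds for the symmetric form B v w = ⟪v,w⟫ - (1/L) H v w -/
lemma bilin_bound (H : E →L[ℝ] E →L[ℝ] ℝ) (Hsymm : ∀ v w : E, H v w = H w v)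
    (α L : ℝ) (hα : 0 < α) (hαL : α ≤ L)
    (hlow : ∀ v : E, α * ‖v‖^2 ≤ H v v) (hup : ∀ v : E, H v v ≤ L * ‖v‖^2)
    (v w : E) : ⟪v, w⟫ - (1/L) * H v w ≤ (1 - α/L) * (‖v‖ * ‖w‖) := by
  have hL : 0 < L := lt_of_lt_of_le hα hαL
  set c : ℝ := 1 - α/L with hc
  have hc0 : 0 ≤ c := by
    rw [hc]; have : α/L ≤ 1 := by rw [div_le_one hL]; exact hαL
    linarith
  set B : E → E → ℝ := fun x y => ⟪x, y⟫ - (1/L) * H x y with hB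
  clear_value B
  clear_value c
  have hQ0 : ∀ x : E, 0 ≤ B x x := by
    intro x
    have h' : 1/L * H x x ≤ 1/L * (L * ‖x‖^2) :=
      mul_le_mul_of_nonneg_left (hup x) (by positivity)
    have he : 1/L * (L * ‖x‖^2) = ‖x‖^2 := by field_simp
    simp only [hB, real_inner_self_eq_norm_sq]
    linarith
  have hQc : ∀ x : E, B x x ≤ c * ‖x‖^2 := by
    intro x
    have h' : 1/L * (α * ‖x‖^2) ≤ 1/L * H x x :=
      mul_le_mul_of_nonneg_left (hlow x) (by positivity)
    have he : 1/L * (α * ‖x‖^2) = α/L * ‖x‖^2 := by ring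
    simp only [hB, real_inner_self_eq_norm_sq, hc]
    linarith
  -- half-bound : B x y ≤ (B x x + B y y)/2
  have hhalf : ∀ x y : E, B x y ≤ (B x x + B y y) / 2 := by
    intro x y
    have hexp : B (x - y) (x - y) = B x x + B y y - 2 * B x y := by
      simp only [hB, inner_sub_left, inner_sub_right, map_sub,
        ContinuousLinearMap.sub_apply]
      linear_combination (-1) * real_inner_comm x y + (1/L) * Hsymm y x
    have := hQ0 (x - y)
    linarith
  have hgoal : ∀ x y : E, B x y ≤ c * (‖x‖ * ‖y‖) → ⟪x, y⟫ - (1/L) * H x y ≤ c * (‖x‖ * ‖y‖) := by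
    intro x y h
    simpa [hB] using h
  apply hgoal v w
  by_cases hv : v = 0
  · subst hv
    have hz : B 0 w = 0 := by simp [hB]
    rw [hz]
    positivity
  by_cases hw : w = 0
  · subst hw
    have hz : B v 0 = 0 := by simp [hB]
    rw [hz]
    positivity
  have hvn : 0 < ‖v‖ := norm_pos_iff.2 hv
  have hwn : 0 < ‖w‖ := norm_pos_iff.2 hw
  set t : ℝ := Real.sqrt (‖w‖ / ‖v‖) with htdef
  have ht : 0 < t := Real.sqrt_pos.2 (by positivity)
  have ht2 : t^2 = ‖w‖ / ‖v‖ := Real.sq_sqrt (by positivity)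
  clear_value t
  have hscale : B (t • v) ((1/t) • w) = B v w := by
    simp only [hB, real_inner_smul_left, real_inner_smul_right, map_smul,
      ContinuousLinearMap.smul_apply, smul_eq_mul]
    field_simp
  have h1 : B v w ≤ (B (t • v) (t • v) + B ((1/t) • w) ((1/t) • w)) / 2 := by
    rw [← hscale]; exact hhalf _ _
  have h2 : B (t • v) (t • v) ≤ c * (t^2 * ‖v‖^2) := by
    have := hQc (t • v)
    rwa [norm_smul, Real.norm_eq_abs, abs_of_pos ht, mul_pow] at this
  have h3 : B ((1/t) • w) ((1/t) • w) ≤ c * ((1/t)^2 * ‖w‖^2) := by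
    have := hQc ((1/t) • w)
    rwa [norm_smul, Real.norm_eq_abs, abs_of_pos (by positivity : (0:ℝ) < 1/t), mul_pow] at this
  have e1 : t^2 * ‖v‖^2 = ‖w‖ * ‖v‖ := by
    rw [ht2]; field_simp
  have e2 : (1/t)^2 * ‖w‖^2 = ‖v‖ * ‖w‖ := by
    rw [div_pow, one_pow, ht2]; field_simp
  rw [e1] at h2
  rw [e2] at h3
  linarith


lemma grad_inner (f : (EuclideanSpace ℝ (Fin p)) → ℝ) (z v : EuclideanSpace ℝ (Fin p)) :
    ⟪gradient f z, v⟫ = fderiv ℝ f z v := by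
  rw [gradient, ← InnerProductSpace.toDual_apply_apply, LinearIsometryEquiv.apply_symm_apply]

lemma contraction (f : (EuclideanSpace ℝ (Fin p)) → ℝ) (hf : ContDiff ℝ 2 f)
    (α L : ℝ) (hα : 0 < α) (hαL : α ≤ L)
    (x y : EuclideanSpace ℝ (Fin p))
    (hH : ∀ s : ℝ, s ∈ Set.Icc (0:ℝ) 1 → ∀ v : EuclideanSpace ℝ (Fin p),
      α * ‖v‖^2 ≤ iteratedFDeriv ℝ 2 f (x + s • (y - x)) ![v, v] ∧
      iteratedFDeriv ℝ 2 f (x + s • (y - x)) ![v, v] ≤ L * ‖v‖^2) :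
    ‖(y - x) - (1/L) • (gradient f y - gradient f x)‖ ≤ (1 - α/L) * ‖y - x‖ := by
  have hL : 0 < L := lt_of_lt_of_le hα hαL
  have hdf : Differentiable ℝ f := hf.differentiable (by norm_num)
  have hf' : ContDiff ℝ 1 (fderiv ℝ f) := hf.fderiv_right (by norm_num)
  have hdf' : Differentiable ℝ (fderiv ℝ f) := hf'.differentiable (by norm_num)
  set H : (EuclideanSpace ℝ (Fin p)) → (EuclideanSpace ℝ (Fin p)) →L[ℝ]
      (EuclideanSpace ℝ (Fin p)) →L[ℝ] ℝ := fderiv ℝ (fderiv ℝ f) with hHdef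
  have Hsymm : ∀ z v w, H z v w = H z w v := fun z v w =>
    second_derivative_symmetric (fun y => (hdf y).hasFDerivAt) ((hdf' z).hasFDerivAt) v w
  have Hit : ∀ z v w : EuclideanSpace ℝ (Fin p),
      iteratedFDeriv ℝ 2 f z ![v, w] = H z v w := by
    intro z v w
    rw [iteratedFDeriv_two_apply]
    simp [hHdef]
  set u : EuclideanSpace ℝ (Fin p) := y - x with hu
  set γ : ℝ → EuclideanSpace ℝ (Fin p) := fun s => x + s • u with hγ
  set d : EuclideanSpace ℝ (Fin p) := gradient f y - gradient f x with hd
  set c : ℝ := 1 - α/L with hc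
  clear_value u γ d c
  have hc0 : 0 ≤ c := by
    rw [hc]
    have : α/L ≤ 1 := by rw [div_le_one hL]; exact hαL
    linarith
  -- continuity of the integrand
  have hγcont : Continuous γ := by
    rw [hγ]
    exact continuous_const.add (continuous_id.smul continuous_const)
  have hHcont : Continuous H := hf'.continuous_fderiv (by norm_num)
  have hintc : ∀ v : EuclideanSpace ℝ (Fin p),
      Continuous (fun s : ℝ => H (γ s) u v) := by
    intro v
    exact ((hHcont.comp hγcont).clm_apply continuous_const).clm_apply continuous_const
  -- FTC
  have hFTC : ∀ v : EuclideanSpace ℝ (Fin p),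
      ∫ s in (0:ℝ)..1, H (γ s) u v = fderiv ℝ f y v - fderiv ℝ f x v := by
    intro v
    have hderiv : ∀ s ∈ Set.uIcc (0:ℝ) 1,
        HasDerivAt (fun s => fderiv ℝ f (γ s) v) (H (γ s) u v) s := by
      intro s _
      have hsm : HasDerivAt (fun s : ℝ => s • u) u s := by
        simpa using (hasDerivAt_id s).smul_const u
      have hγd : HasDerivAt γ u s := by
        rw [hγ]; exact hsm.const_add x
      have hc2 : HasFDerivAt (fderiv ℝ f) (H (γ s)) (γ s) := (hdf' (γ s)).hasFDerivAt
      have hcomp : HasDerivAt (fun s => fderiv ℝ f (γ s)) (H (γ s) u) s :=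
        hc2.comp_hasDerivAt s hγd
      simpa using hcomp.clm_apply (hasDerivAt_const s v)
    rw [intervalIntegral.integral_eq_sub_of_hasDerivAt hderiv
      ((hintc v).intervalIntegrable 0 1)]
    have h0 : γ 0 = x := by rw [hγ]; simp
    have h1 : γ 1 = y := by rw [hγ, hu]; simp
    rw [h0, h1]
  -- pointwise bound + integration
  have hkey : ∀ v : EuclideanSpace ℝ (Fin p), ⟪u - (1/L) • d, v⟫ ≤ c * (‖u‖ * ‖v‖) := by
    intro v
    have e1 : ⟪d, v⟫ = fderiv ℝ f y v - fderiv ℝ f x v := by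
      rw [hd, inner_sub_left, grad_inner, grad_inner]
    have hinner : ⟪u - (1/L) • d, v⟫ = ⟪u, v⟫ - (1/L) * (fderiv ℝ f y v - fderiv ℝ f x v) := by
      rw [inner_sub_left, real_inner_smul_left, e1]
    rw [hinner, ← hFTC v]
    have heq : ∫ s in (0:ℝ)..1, (⟪u, v⟫ - (1/L) * H (γ s) u v)
        = ⟪u, v⟫ - (1/L) * ∫ s in (0:ℝ)..1, H (γ s) u v := by
      rw [intervalIntegral.integral_sub intervalIntegrable_const
        (show IntervalIntegrable (fun s => (1/L) * H (γ s) u v) MeasureTheory.volume 0 1 from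
          (continuous_const.mul (hintc v)).intervalIntegrable 0 1),
        intervalIntegral.integral_const_mul]
      simp
    rw [← heq]
    have hbd : ∀ s ∈ Set.Icc (0:ℝ) 1, ⟪u, v⟫ - (1/L) * H (γ s) u v ≤ c * (‖u‖ * ‖v‖) := by
      intro s hs
      have hq := hH s hs
      rw [hc]
      exact bilin_bound (H (γ s)) (Hsymm (γ s)) α L hα hαL
        (fun w => by rw [← Hit]; simp only [hγ]; exact (hq w).1)
        (fun w => by rw [← Hit]; simp only [hγ]; exact (hq w).2) u v
    calc ∫ s in (0:ℝ)..1, (⟪u, v⟫ - (1/L) * H (γ s) u v)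
        ≤ ∫ _ in (0:ℝ)..1, c * (‖u‖ * ‖v‖) := by
          apply intervalIntegral.integral_mono_on (by norm_num)
          · exact (continuous_const.sub (continuous_const.mul (hintc v))).intervalIntegrable 0 1
          · exact intervalIntegrable_const
          · exact hbd
      _ = c * (‖u‖ * ‖v‖) := by simp
  -- conclude
  have hvv := hkey (u - (1/L) • d)
  rw [real_inner_self_eq_norm_sq] at hvv
  rcases eq_or_lt_of_le (norm_nonneg (u - (1/L) • d)) with h0 | h0
  · rw [← h0]
    positivity
  · have hfin : ‖u - (1/L) • d‖ ≤ c * ‖u‖ := by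
      apply le_of_mul_le_mul_right _ h0
      calc ‖u - (1/L) • d‖ * ‖u - (1/L) • d‖ = ‖u - (1/L) • d‖^2 := by ring
        _ ≤ c * (‖u‖ * ‖u - (1/L) • d‖) := hvv
        _ = c * ‖u‖ * ‖u - (1/L) • d‖ := by ring
    exact hfin


variable {M : ℕ}

lemma sub_apply' (a b : EuclideanSpace ℝ (Fin p)) (i : Fin p) : (a - b) i = a i - b i := rfl

lemma suppF_restrict (z : EuclideanSpace ℝ (Fin p)) (W : Finset (Fin p)) :
    suppF (restrict z W) ⊆ W := by
  classical
  intro i hi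
  simp only [suppF, Finset.mem_filter] at hi
  by_contra hW
  exact hi.2 (by simp [_root_.restrict, hW])

lemma approx_id (z w : EuclideanSpace ℝ (Fin p)) (W : Finset (Fin p))
    (hw : suppF w ⊆ W) :
    ‖w - z‖^2 = ‖w - restrict z W‖^2 + (‖z‖^2 - nsq z W) := by
  classical
  have hz : ∀ i, i ∉ W → w i = 0 := suppF_subset_iff.1 hw
  rw [norm_sq_eq, norm_sq_eq, norm_sq_eq]
  rw [← Finset.sum_filter_add_sum_filter_not Finset.univ (· ∈ W) (fun i => ((w - z) i)^2),
      ← Finset.sum_filter_add_sum_filter_not Finset.univ (· ∈ W) (fun i => ((w - restrict z W) i)^2),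
      ← Finset.sum_filter_add_sum_filter_not Finset.univ (· ∈ W) (fun i => (z i)^2)]
  have e1 : ∑ i ∈ Finset.univ.filter (· ∈ W), ((w - z) i)^2
      = ∑ i ∈ Finset.univ.filter (· ∈ W), ((w - restrict z W) i)^2 := by
    apply Finset.sum_congr rfl
    intro i hi
    simp only [Finset.mem_filter] at hi
    rw [sub_apply', sub_apply']
    simp [_root_.restrict, hi.2]
  have e2 : ∑ i ∈ Finset.univ.filter (¬ · ∈ W), ((w - z) i)^2
      = ∑ i ∈ Finset.univ.filter (¬ · ∈ W), (z i)^2 := by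
    apply Finset.sum_congr rfl
    intro i hi
    simp only [Finset.mem_filter] at hi
    rw [sub_apply', hz i hi.2]
    ring
  have e3 : ∑ i ∈ Finset.univ.filter (¬ · ∈ W), ((w - restrict z W) i)^2 = 0 := by
    apply Finset.sum_eq_zero
    intro i hi
    simp only [Finset.mem_filter] at hi
    rw [sub_apply', hz i hi.2]
    simp [_root_.restrict, hi.2]
  have e4 : nsq z W = ∑ i ∈ Finset.univ.filter (· ∈ W), (z i)^2 := by
    rw [nsq, Finset.filter_mem_eq_inter, Finset.univ_inter]
  rw [e1, e2, e3, e4]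
  ring

lemma proj_structure (G : Fin M → Finset (Fin p)) (k : ℕ)
    (gt wt1 : EuclideanSpace ℝ (Fin p)) (h : IsExactProj G k gt wt1) :
    ∃ A : Finset (Fin M), A.card ≤ k ∧ wt1 = restrict gt (A.biUnion G) ∧
      ∀ A' : Finset (Fin M), A'.card ≤ k →
        nsq gt (A'.biUnion G) ≤ nsq gt (A.biUnion G) := by
  obtain ⟨⟨A, hA, hsupp⟩, hopt⟩ := h
  have hidR : ∀ W : Finset (Fin p), ‖restrict gt W - gt‖^2 = ‖gt‖^2 - nsq gt W := by
    intro W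
    have := approx_id gt (restrict gt W) W (suppF_restrict gt W)
    simpa using this
  have hid : ‖wt1 - gt‖^2 = ‖wt1 - restrict gt (A.biUnion G)‖^2
      + (‖gt‖^2 - nsq gt (A.biUnion G)) := approx_id gt wt1 _ hsupp
  have hle : ‖wt1 - gt‖ ≤ ‖restrict gt (A.biUnion G) - gt‖ :=
    hopt _ ⟨A, hA, suppF_restrict _ _⟩
  have hle2 : ‖wt1 - gt‖^2 ≤ ‖restrict gt (A.biUnion G) - gt‖^2 :=
    pow_le_pow_left₀ (norm_nonneg _) hle 2
  rw [hidR] at hle2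
  have h00 : ‖wt1 - restrict gt (A.biUnion G)‖ = 0 := by
    nlinarith [norm_nonneg (wt1 - restrict gt (A.biUnion G))]
  have heq : wt1 = restrict gt (A.biUnion G) := sub_eq_zero.1 (norm_eq_zero.1 h00)
  refine ⟨A, hA, heq, ?_⟩
  intro A' hA'
  have hsq := pow_le_pow_left₀ (norm_nonneg _)
    (hopt (restrict gt (A'.biUnion G)) ⟨A', hA', suppF_restrict _ _⟩) 2
  rw [heq, hidR, hidR] at hsq
  linarith

lemma nsq_eq_zero {z : EuclideanSpace ℝ (Fin p)} {S : Finset (Fin p)}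
    (h : nsq z S = 0) : ∀ i ∈ S, z i = 0 := by
  intro i hi
  have := (Finset.sum_eq_zero_iff_of_nonneg (fun j _ => sq_nonneg (z j))).1 h i hi
  exact pow_eq_zero_iff (by norm_num) |>.1 this

/-- padded projection structure, when `k ≤ M` -/
lemma proj_structure_padded (G : Fin M → Finset (Fin p)) (k : ℕ) (hkM : k ≤ M)
    (gt wt1 : EuclideanSpace ℝ (Fin p)) (h : IsExactProj G k gt wt1) :
    ∃ B : Finset (Fin M), B.card = k ∧ wt1 = restrict gt (B.biUnion G) ∧
      ∀ A' : Finset (Fin M), A'.card ≤ k →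
        nsq gt (A'.biUnion G) ≤ nsq gt (B.biUnion G) := by
  obtain ⟨A, hA, heq, hopt⟩ := proj_structure G k gt wt1 h
  obtain ⟨B, hAB, hBcard⟩ := Finset.exists_superset_card_eq hA (by simpa using hkM)
  have hUsub : A.biUnion G ⊆ B.biUnion G := Finset.biUnion_subset_biUnion_of_subset_left G hAB
  have hle : nsq gt (B.biUnion G) ≤ nsq gt (A.biUnion G) := hopt B (le_of_eq hBcard)
  have hge : nsq gt (A.biUnion G) ≤ nsq gt (B.biUnion G) := nsq_mono gt hUsub
  have hzero : nsq gt (B.biUnion G \ A.biUnion G) = 0 := by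
    have : nsq gt (B.biUnion G) = nsq gt (A.biUnion G) + nsq gt (B.biUnion G \ A.biUnion G) := by
      rw [← nsq_union (Finset.disjoint_sdiff), Finset.union_sdiff_of_subset hUsub]
    linarith
  have heq2 : restrict gt (A.biUnion G) = restrict gt (B.biUnion G) := by
    ext i
    simp only [_root_.restrict]
    by_cases h1 : i ∈ A.biUnion G
    · simp [h1, hUsub h1]
    · by_cases h2 : i ∈ B.biUnion G
      · simp only [h1, h2, if_true, if_false]
        exact (nsq_eq_zero hzero i (Finset.mem_sdiff.2 ⟨h2, h1⟩)).symm
      · simp [h1, h2]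
  refine ⟨B, hBcard, heq.trans heq2, ?_⟩
  intro A' hA'
  exact le_trans (hopt A' hA') hge

lemma mem_suppF {z : EuclideanSpace ℝ (Fin p)} {i : Fin p} :
    i ∈ suppF z ↔ z i ≠ 0 := by
  simp [suppF]

lemma sq_to_sqrt {a b r : ℝ} (ha : 0 ≤ a) (hb : 0 ≤ b) (hr : 0 ≤ r) (h : a^2 ≤ r * b^2) :
    a ≤ Real.sqrt r * b := by
  have e : a = Real.sqrt (a^2) := (Real.sqrt_sq ha).symm
  rw [e]
  calc Real.sqrt (a^2) ≤ Real.sqrt (r * b^2) := Real.sqrt_le_sqrt h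
    _ = Real.sqrt r * b := by rw [Real.sqrt_mul hr, Real.sqrt_sq hb]

lemma proj_error (G : Fin M → Finset (Fin p)) (hcov : ∀ i : Fin p, ∃ j : Fin M, i ∈ G j)
    (kstar k : ℕ) (h1 : 1 ≤ kstar) (h2 : kstar ≤ k)
    (gt wstar wt1 : EuclideanSpace ℝ (Fin p))
    (hwstar : GroupSparse G kstar wstar) (hwt1 : IsExactProj G k gt wt1) :
    ‖restrict (wt1 - gt) (suppF wt1 ∪ suppF wstar)‖ ≤
      Real.sqrt ((kstar : ℝ) / (k : ℝ)) * ‖restrict (gt - wstar) (suppF wt1 ∪ suppF wstar)‖ := by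
  classical
  set Sstar := suppF wstar with hSstar
  set S := suppF wt1 ∪ Sstar with hSdef
  by_cases hkM : k ≤ M
  case neg =>
    -- k > M : the projection is exact, wt1 = gt
    obtain ⟨A, hA, heq, hopt⟩ := proj_structure G k gt wt1 hwt1
    have huniv : (Finset.univ : Finset (Fin M)).biUnion G = Finset.univ := by
      apply Finset.eq_univ_of_forall
      intro i
      obtain ⟨j, hj⟩ := hcov i
      exact Finset.mem_biUnion.2 ⟨j, Finset.mem_univ j, hj⟩
    have hle := hopt Finset.univ (by simpa using le_of_lt (not_le.1 hkM))
    rw [huniv] at hle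
    have hge : nsq gt (A.biUnion G) ≤ nsq gt Finset.univ :=
      nsq_mono gt (Finset.subset_univ _)
    have hzero : ∀ i, i ∉ A.biUnion G → gt i = 0 := by
      intro i hi
      have heq0 : nsq gt (Finset.univ \ A.biUnion G) = 0 := by
        have : nsq gt Finset.univ = nsq gt (A.biUnion G)
            + nsq gt (Finset.univ \ A.biUnion G) := by
          rw [← nsq_union (Finset.disjoint_sdiff),
            Finset.union_sdiff_of_subset (Finset.subset_univ _)]
        linarith
      exact nsq_eq_zero heq0 i (Finset.mem_sdiff.2 ⟨Finset.mem_univ i, hi⟩)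
    have hwg : wt1 = gt := by
      rw [heq]
      ext i
      simp only [_root_.restrict]
      by_cases hi : i ∈ A.biUnion G
      · simp [hi]
      · simp [hi, (hzero i hi).symm]
    have hz : _root_.restrict (wt1 - gt) S = 0 := by
      rw [hwg, sub_self]
      ext i
      simp only [_root_.restrict]
      split <;> rfl
    rw [hz]
    simp only [norm_zero]
    positivity
  case pos =>
    obtain ⟨B, hBcard, heqB, hopt⟩ := proj_structure_padded G k hkM gt wt1 hwt1
    set U := B.biUnion G with hU
    obtain ⟨Astar, hAstarcard, hAstarsupp⟩ := hwstar
    set Wd : Fin M → Finset (Fin p) :=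
      fun j => (G j \ (B.filter (fun j' => j' < j)).biUnion G) \ Sstar with hWd
    have hWdsub : ∀ j ∈ B, Wd j ⊆ U \ Sstar := by
      intro j hj i hi
      rw [hWd] at hi
      simp only [Finset.mem_sdiff] at hi
      exact Finset.mem_sdiff.2 ⟨(Finset.subset_biUnion_of_mem G hj) hi.1.1, hi.2⟩
    have hWddisj : (B : Set (Fin M)).PairwiseDisjoint Wd := by
      intro j hj j' hj' hne
      simp only [Finset.coe_mem, Finset.mem_coe] at hj hj'
      rcases lt_or_gt_of_ne hne with hlt | hlt
      · apply Finset.disjoint_left.2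
        intro i hij hij'
        rw [hWd] at hij hij'
        simp only [Finset.mem_sdiff] at hij hij'
        exact hij'.1.2 (Finset.mem_biUnion.2 ⟨j, Finset.mem_filter.2 ⟨hj, hlt⟩, hij.1.1⟩)
      · apply Finset.disjoint_left.2
        intro i hij hij'
        rw [hWd] at hij hij'
        simp only [Finset.mem_sdiff] at hij hij'
        exact hij.1.2 (Finset.mem_biUnion.2 ⟨j', Finset.mem_filter.2 ⟨hj', hlt⟩, hij'.1.1⟩)
    obtain ⟨J, hJB, hJcard, hJineq⟩ := select kstar B (fun j => nsq gt (Wd j))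
      (fun j _ => nsq_nonneg gt (Wd j)) (by omega)
    set V := (B \ J).biUnion G with hV
    set XU := J.biUnion Wd with hXU
    have hsumJ : ∑ j ∈ J, nsq gt (Wd j) = nsq gt XU := by
      rw [hXU, nsq, Finset.sum_biUnion (hWddisj.subset (by exact_mod_cast hJB))]
      rfl
    have hsumB : ∑ j ∈ B, nsq gt (Wd j) ≤ nsq gt (U \ Sstar) := by
      rw [show ∑ j ∈ B, nsq gt (Wd j) = nsq gt (B.biUnion Wd) by
        rw [nsq, Finset.sum_biUnion hWddisj]; rfl]
      exact nsq_mono gt (Finset.biUnion_subset.2 hWdsub)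
    -- swap step
    set A'' := (B \ J) ∪ Astar with hA''
    have hcard'' : A''.card ≤ k := by
      calc A''.card ≤ (B \ J).card + Astar.card := Finset.card_union_le _ _
        _ = (k - kstar) + Astar.card := by rw [Finset.card_sdiff_of_subset hJB, hBcard, hJcard]
        _ ≤ (k - kstar) + kstar := by omega
        _ = k := by omega
    set U'' := A''.biUnion G with hU''
    have hVU'' : V ⊆ U'' := by
      rw [hV, hU'', hA'']
      exact Finset.biUnion_subset_biUnion_of_subset_left G Finset.subset_union_left
    have hAstarU'' : Astar.biUnion G ⊆ U'' := by
      rw [hU'', hA'']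
      exact Finset.biUnion_subset_biUnion_of_subset_left G Finset.subset_union_right
    set P2 := (U \ V) \ XU with hP2def
    set P3 := Sstar \ U with hP3def
    have hP2 : P2 ⊆ Astar.biUnion G := by
      intro i hi
      rw [hP2def] at hi
      simp only [Finset.mem_sdiff] at hi
      obtain ⟨⟨hiU, hiV⟩, hiX⟩ := hi
      by_cases hiS : i ∈ Sstar
      · exact hAstarsupp hiS
      · exfalso
        have hne : (B.filter (fun j => i ∈ G j)).Nonempty := by
          obtain ⟨j, hj, hij⟩ := Finset.mem_biUnion.1 hiU
          exact ⟨j, Finset.mem_filter.2 ⟨hj, hij⟩⟩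
        set j0 := (B.filter (fun j => i ∈ G j)).min' hne with hj0
        have hj0mem := (B.filter (fun j => i ∈ G j)).min'_mem hne
        rw [← hj0] at hj0mem
        obtain ⟨hj0B, hj0G⟩ := Finset.mem_filter.1 hj0mem
        have hj0J : j0 ∈ J := by
          by_contra hc
          exact hiV (Finset.mem_biUnion.2 ⟨j0, Finset.mem_sdiff.2 ⟨hj0B, hc⟩, hj0G⟩)
        apply hiX
        rw [hXU]
        apply Finset.mem_biUnion.2 ⟨j0, hj0J, ?_⟩
        rw [hWd]
        simp only [Finset.mem_sdiff]
        refine ⟨⟨hj0G, ?_⟩, hiS⟩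
        intro hmem
        obtain ⟨j', hj'f, hij'⟩ := Finset.mem_biUnion.1 hmem
        obtain ⟨hj'B, hj'lt⟩ := Finset.mem_filter.1 hj'f
        have : j0 ≤ j' := Finset.min'_le _ j' (Finset.mem_filter.2 ⟨hj'B, hij'⟩)
        omega
    have hkey1 : nsq gt U = nsq gt V + nsq gt (U \ V) := by
      rw [← nsq_union (Finset.disjoint_sdiff), Finset.union_sdiff_of_subset]
      rw [hV, hU]
      exact Finset.biUnion_subset_biUnion_of_subset_left G (Finset.sdiff_subset)
    have hkey2 : nsq gt (U \ V) = nsq gt ((U \ V) ∩ XU) + nsq gt P2 := by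
      rw [hP2def, ← nsq_union (by
        apply Finset.disjoint_left.2
        intro i hi hdi
        exact (Finset.mem_sdiff.1 hdi).2 (Finset.mem_inter.1 hi).2)]
      congr 1
      ext i
      simp only [Finset.mem_union, Finset.mem_inter, Finset.mem_sdiff]
      tauto
    have hkey3 : nsq gt ((U \ V) ∩ XU) ≤ nsq gt XU :=
      nsq_mono gt Finset.inter_subset_right
    have hkey4 : nsq gt V + nsq gt P2 + nsq gt P3 ≤ nsq gt U'' := by
      have hd1 : Disjoint V P2 := by
        apply Finset.disjoint_left.2
        intro i hi hdi
        exact (Finset.mem_sdiff.1 (Finset.mem_sdiff.1 hdi).1).2 hi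
      have hd2 : Disjoint (V ∪ P2) P3 := by
        apply Finset.disjoint_left.2
        intro i hi hdi
        have hiU : i ∈ U := by
          rcases Finset.mem_union.1 hi with h | h
          · exact (Finset.biUnion_subset_biUnion_of_subset_left G Finset.sdiff_subset) h
          · exact (Finset.mem_sdiff.1 (Finset.mem_sdiff.1 h).1).1
        exact (Finset.mem_sdiff.1 hdi).2 hiU
      have hQsub : (V ∪ P2) ∪ P3 ⊆ U'' := by
        apply Finset.union_subset (Finset.union_subset hVU'' (hP2.trans hAstarU''))
        exact (Finset.sdiff_subset.trans hAstarsupp).trans hAstarU''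
      calc nsq gt V + nsq gt P2 + nsq gt P3
          = nsq gt ((V ∪ P2) ∪ P3) := by rw [nsq_union hd2, nsq_union hd1]
        _ ≤ nsq gt U'' := nsq_mono gt hQsub
    have hkey5 : nsq gt U'' ≤ nsq gt U := hopt A'' hcard''
    have hP3bound : nsq gt P3 ≤ ∑ j ∈ J, nsq gt (Wd j) := by
      rw [hsumJ]
      linarith
    -- support of wt1
    have hsupp1 : suppF wt1 ⊆ U := by
      rw [heqB]
      exact suppF_restrict gt U
    have hwt1U : ∀ i, i ∈ U → wt1 i = gt i := by
      intro i hi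
      rw [heqB]
      simp [_root_.restrict, hi]
    have hwt1U' : ∀ i, i ∉ U → wt1 i = 0 := by
      intro i hi
      rw [heqB]
      simp [_root_.restrict, hi]
    -- LHS squared = nsq gt (S \ U)
    have hL6 : ‖_root_.restrict (wt1 - gt) S‖^2 = nsq gt (S \ U) := by
      rw [norm_restrict_sq, nsq, nsq]
      rw [← Finset.sum_subset (Finset.sdiff_subset : S \ U ⊆ S)
        (fun i _ hi2 => ?_)]
      · apply Finset.sum_congr rfl
        intro i hi
        obtain ⟨_, hiU⟩ := Finset.mem_sdiff.1 hi
        rw [sub_apply', hwt1U' i hiU]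
        ring
      · have hiU : i ∈ U := by
          by_contra hc
          exact hi2 (Finset.mem_sdiff.2 ⟨‹i ∈ S›, hc⟩)
        rw [sub_apply', hwt1U i hiU, sub_self]
        ring
    have hSUP3 : S \ U ⊆ P3 := by
      intro i hi
      obtain ⟨hiS, hiU⟩ := Finset.mem_sdiff.1 hi
      rcases Finset.mem_union.1 hiS with h | h
      · exact absurd (hsupp1 h) hiU
      · exact Finset.mem_sdiff.2 ⟨h, hiU⟩
    -- RHS squared ≥ nsq gt (U \ Sstar)
    have hL5 : nsq gt (U \ Sstar) ≤ ‖_root_.restrict (gt - wstar) S‖^2 := by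
      rw [norm_restrict_sq]
      set T := (U \ Sstar) ∩ suppF gt with hT
      have hTsub : T ⊆ U \ Sstar := Finset.inter_subset_left
      have step1 : nsq gt (U \ Sstar) = nsq gt T := by
        rw [nsq, nsq]
        apply (Finset.sum_subset hTsub ?_).symm
        intro i hi hiT
        have : i ∉ suppF gt := fun hc => hiT (Finset.mem_inter.2 ⟨hi, hc⟩)
        rw [not_not.1 (fun hc => this (mem_suppF.2 hc))]
        ring
      have step2 : nsq gt T = nsq (gt - wstar) T := by
        apply Finset.sum_congr rfl
        intro i hi
        have hiS : i ∉ Sstar := (Finset.mem_sdiff.1 (hTsub hi)).2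
        have : wstar i = 0 := by
          by_contra hc
          exact hiS (mem_suppF.2 hc)
        rw [sub_apply', this, sub_zero]
      have step3 : T ⊆ S := by
        intro i hi
        have hiU : i ∈ U := (Finset.mem_sdiff.1 (hTsub hi)).1
        have hig : gt i ≠ 0 := mem_suppF.1 (Finset.mem_inter.1 hi).2
        apply Finset.mem_union.2
        left
        apply mem_suppF.2
        rw [hwt1U i hiU]
        exact hig
      rw [step1, step2]
      exact nsq_mono _ step3
    -- put everything together
    have hk0 : (0:ℝ) < (k : ℝ) := by
      have : 1 ≤ k := le_trans h1 h2
      exact_mod_cast Nat.lt_of_lt_of_le Nat.zero_lt_one this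
    have hchain : ‖_root_.restrict (wt1 - gt) S‖^2
        ≤ ((kstar : ℝ) / (k : ℝ)) * ‖_root_.restrict (gt - wstar) S‖^2 := by
      rw [hL6]
      have s1 : nsq gt (S \ U) ≤ nsq gt P3 := nsq_mono gt hSUP3
      have s2 : (k:ℝ) * ∑ j ∈ J, nsq gt (Wd j) ≤ (kstar:ℝ) * ∑ j ∈ B, nsq gt (Wd j) := by
        rw [← hBcard]
        exact_mod_cast hJineq
      have s3 : (kstar:ℝ) * ∑ j ∈ B, nsq gt (Wd j) ≤ (kstar:ℝ) * nsq gt (U \ Sstar) :=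
        mul_le_mul_of_nonneg_left hsumB (by positivity)
      have s4 : (kstar:ℝ) * nsq gt (U \ Sstar)
          ≤ (kstar:ℝ) * ‖_root_.restrict (gt - wstar) S‖^2 :=
        mul_le_mul_of_nonneg_left hL5 (by positivity)
      rw [div_mul_eq_mul_div, le_div_iff₀ hk0]
      calc nsq gt (S \ U) * (k:ℝ) = (k:ℝ) * nsq gt (S \ U) := by ring
        _ ≤ (k:ℝ) * ∑ j ∈ J, nsq gt (Wd j) := by
            apply mul_le_mul_of_nonneg_left _ (le_of_lt hk0)
            exact le_trans s1 hP3bound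
        _ ≤ (kstar:ℝ) * ‖_root_.restrict (gt - wstar) S‖^2 := by linarith
    exact sq_to_sqrt (norm_nonneg _) (norm_nonneg _) (by positivity) hchain

end IHT

/-- one step of IHT with exact projections, under RSC/RSS of order `2k + k*`
with constants `0 < α ≤ L`: `‖w_{t+1} − w*‖ ≤ (1 + √(k*/k)) ·
[(1 − α/L)‖w_t − w*‖ + (1/L)‖(∇f(w*))_{S_{t+1} ∪ S*}‖]`. -/
theorem stmt_7 (p M : ℕ) (hp : 1 ≤ p) (hM : 1 ≤ M)
    (G : Fin M → Finset (Fin p)) (hcov : ∀ i : Fin p, ∃ j : Fin M, i ∈ G j)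
    (f : EuclideanSpace ℝ (Fin p) → ℝ)
    (kstar k : ℕ) (h1 : 1 ≤ kstar) (h2 : kstar ≤ k)
    (α L : ℝ) (hα : 0 < α) (hαL : α ≤ L)
    (hf : RSCRSS G (2 * k + kstar) α L f)
    (wstar : EuclideanSpace ℝ (Fin p)) (hwstar : GroupSparse G kstar wstar)
    (wt : EuclideanSpace ℝ (Fin p)) (hwt : GroupSparse G k wt)
    (gt : EuclideanSpace ℝ (Fin p)) (hgt : gt = wt - (1 / L) • gradient f wt)
    (wt1 : EuclideanSpace ℝ (Fin p)) (hwt1 : IsExactProj G k gt wt1) :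
    ‖wt1 - wstar‖ ≤ (1 + Real.sqrt ((kstar : ℝ) / (k : ℝ))) *
      ((1 - α / L) * ‖wt - wstar‖ +
        (1 / L) * ‖restrict (gradient f wstar) (suppF wt1 ∪ suppF wstar)‖) := by
  classical
  open IHT in
  have hL : 0 < L := lt_of_lt_of_le hα hαL
  set S := suppF wt1 ∪ suppF wstar with hS
  -- the decomposition of wt1 - wstar
  have hsuppdiff : suppF (wt1 - wstar) ⊆ S := by
    rw [suppF_subset_iff]
    intro i hi
    have h1 : wt1 i = 0 := by
      by_contra hc
      exact hi (Finset.mem_union_left _ (mem_suppF.2 hc))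
    have h2 : wstar i = 0 := by
      by_contra hc
      exact hi (Finset.mem_union_right _ (mem_suppF.2 hc))
    rw [sub_apply', h1, h2, sub_zero]
  have hdecomp : wt1 - wstar = restrict (wt1 - gt) S + restrict (gt - wstar) S := by
    have e : restrict (wt1 - gt) S + restrict (gt - wstar) S = restrict (wt1 - wstar) S := by
      rw [restrict_sub, restrict_sub, restrict_sub]
      abel
    rw [e, restrict_eq_self hsuppdiff]
  have htri : ‖wt1 - wstar‖ ≤ ‖restrict (wt1 - gt) S‖ + ‖restrict (gt - wstar) S‖ := by
    rw [hdecomp]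
    exact norm_add_le _ _
  -- projection error bound
  have hproj : ‖restrict (wt1 - gt) S‖ ≤
      Real.sqrt ((kstar : ℝ) / (k : ℝ)) * ‖restrict (gt - wstar) S‖ :=
    proj_error G hcov kstar k h1 h2 gt wstar wt1 hwstar hwt1
  -- group sparsity along the segment
  have hgsseg : ∀ s : ℝ, GroupSparse G (2 * k + kstar) (wstar + s • (wt - wstar)) := by
    obtain ⟨Astar, hc1, hs1⟩ := hwstar
    obtain ⟨At, hc2, hs2⟩ := hwt
    intro s
    refine ⟨Astar ∪ At, ?_, ?_⟩
    · calc (Astar ∪ At).card ≤ Astar.card + At.card := Finset.card_union_le _ _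
        _ ≤ 2 * k + kstar := by omega
    · rw [suppF_subset_iff]
      intro i hi
      have hbu : (Astar ∪ At).biUnion G = Astar.biUnion G ∪ At.biUnion G := by
        ext a
        simp only [Finset.mem_biUnion, Finset.mem_union]
        constructor
        · rintro ⟨j, hj | hj, hG⟩
          · exact Or.inl ⟨j, hj, hG⟩
          · exact Or.inr ⟨j, hj, hG⟩
        · rintro (⟨j, hj, hG⟩ | ⟨j, hj, hG⟩)
          · exact ⟨j, Or.inl hj, hG⟩
          · exact ⟨j, Or.inr hj, hG⟩
      rw [hbu] at hi
      have h1 : wstar i = 0 := suppF_subset_iff.1 hs1 i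
        (fun hc => hi (Finset.mem_union_left _ hc))
      have h2 : wt i = 0 := suppF_subset_iff.1 hs2 i
        (fun hc => hi (Finset.mem_union_right _ hc))
      have e1 : (wstar + s • (wt - wstar)) i = wstar i + s * (wt i - wstar i) := rfl
      rw [e1, h1, h2]
      ring
  -- contraction bound
  have hcontr : ‖(wt - wstar) - (1/L) • (gradient f wt - gradient f wstar)‖
      ≤ (1 - α/L) * ‖wt - wstar‖ :=
    contraction f hf.1 α L hα hαL wstar wt
      (fun s _ v => hf.2 (wstar + s • (wt - wstar)) (hgsseg s) v)
  -- bound for the gradient-step error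
  have hEbound : ‖restrict (gt - wstar) S‖ ≤
      (1 - α/L) * ‖wt - wstar‖ + (1/L) * ‖restrict (gradient f wstar) S‖ := by
    have hgts : gt - wstar = ((wt - wstar) - (1/L) • (gradient f wt - gradient f wstar))
        - (1/L) • gradient f wstar := by
      rw [hgt, smul_sub]
      abel
    calc ‖restrict (gt - wstar) S‖
        = ‖restrict ((wt - wstar) - (1/L) • (gradient f wt - gradient f wstar)) S
            - restrict ((1/L) • gradient f wstar) S‖ := by rw [← restrict_sub, ← hgts]
      _ ≤ ‖restrict ((wt - wstar) - (1/L) • (gradient f wt - gradient f wstar)) S‖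
            + ‖restrict ((1/L) • gradient f wstar) S‖ := norm_sub_le _ _
      _ ≤ (1 - α/L) * ‖wt - wstar‖ + (1/L) * ‖restrict (gradient f wstar) S‖ := by
          apply add_le_add
          · exact le_trans (norm_restrict_le _ _) hcontr
          · rw [restrict_smul, norm_smul, Real.norm_eq_abs,
              abs_of_pos (by positivity : (0:ℝ) < 1/L)]
  -- conclusion
  have hsq0 : 0 ≤ Real.sqrt ((kstar : ℝ) / (k : ℝ)) := Real.sqrt_nonneg _
  calc ‖wt1 - wstar‖
      ≤ ‖restrict (wt1 - gt) S‖ + ‖restrict (gt - wstar) S‖ := htri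
    _ ≤ Real.sqrt ((kstar : ℝ) / (k : ℝ)) * ‖restrict (gt - wstar) S‖
        + ‖restrict (gt - wstar) S‖ := add_le_add_left hproj _
    _ = (1 + Real.sqrt ((kstar : ℝ) / (k : ℝ))) * ‖restrict (gt - wstar) S‖ := by ring
    _ ≤ (1 + Real.sqrt ((kstar : ℝ) / (k : ℝ))) *
        ((1 - α / L) * ‖wt - wstar‖ + (1 / L) * ‖restrict (gradient f wstar) S‖) := by
          apply mul_le_mul_of_nonneg_left hEbound
          positivity
end
end

section
/- Suppose f : ℝ^p → ℝ satisfies RSC/RSS of order 2k + k* with constants 0 < α ≤ L. Let w* be k*-group-sparse with S* = supp(w*) (k* ≥ 1), let w_t be k-group-sparse, and let g_t = w_t − (1/L)∇f(w_t). Let i_1, …, i_k be a greedy selection for g_t, let w_{t+1} = (g_t)_{B_k} be the greedy projection with parameter k, and S_{t+1} = supp(w_{t+1}). Then for every integer k̃ with 1 ≤ k̃ < k: ‖w_{t+1} − w*‖ ≤ (1 + √(k*/(k − k̃))) · [ (1 − α/L)‖w_t − w*‖ + (1/L)‖(∇f(w*))_{S_{t+1} ∪ S*}‖ ] + e^{−k̃/(2k*)}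 · √(k*/(k − k̃)) · ‖(g_t)_{S*}‖. -/
open Finset

noncomputable section

namespace S9
variable {p : ℕ}

def Q {p : ℕ} (z : EuclideanSpace ℝ (Fin p)) (S : Finset (Fin p)) : ℝ :=
  ∑ i ∈ S, (z i)^2

lemma Q_nonneg (z : EuclideanSpace ℝ (Fin p)) (S : Finset (Fin p)) : 0 ≤ Q z S :=
  Finset.sum_nonneg fun _ _ => sq_nonneg _

lemma sq_norm (x : EuclideanSpace ℝ (Fin p)) : ‖x‖^2 = ∑ i, (x i)^2 := by
  rw [EuclideanSpace.norm_eq, Real.sq_sqrt (by positivity)]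
  simp [Real.norm_eq_abs, sq_abs]

lemma sq_norm_restrict (z : EuclideanSpace ℝ (Fin p)) (S : Finset (Fin p)) :
    ‖restrict z S‖^2 = Q z S := by
  rw [sq_norm]
  rw [show (fun i => (restrict z S i)^2) = fun i => if i ∈ S then (z i)^2 else 0 by
    funext i; show (if i ∈ S then z i else 0)^2 = _; split <;> simp]
  rw [Finset.sum_ite_mem, Finset.univ_inter, Q]

lemma norm_restrict (z : EuclideanSpace ℝ (Fin p)) (S : Finset (Fin p)) :
    ‖restrict z S‖ = Real.sqrt (Q z S) := by
  rw [← sq_norm_restrict]; exact (Real.sqrt_sq (norm_nonneg _)).symm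

lemma Q_mono (z : EuclideanSpace ℝ (Fin p)) {S T : Finset (Fin p)} (h : S ⊆ T) :
    Q z S ≤ Q z T :=
  Finset.sum_le_sum_of_subset_of_nonneg h (fun _ _ _ => sq_nonneg _)

lemma Q_le_of (z w : EuclideanSpace ℝ (Fin p)) {S T : Finset (Fin p)}
    (h0 : ∀ i ∈ S, i ∉ T → z i = 0) (h1 : ∀ i ∈ S, i ∈ T → (z i)^2 ≤ (w i)^2) :
    Q z S ≤ Q w T := by
  have : Q z S = Q z (S ∩ T) := by
    rw [Q, Q]
    refine (Finset.sum_subset (Finset.inter_subset_left) ?_).symm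
    intro i hi hni
    have := h0 i hi (fun hT => hni (Finset.mem_inter.2 ⟨hi, hT⟩))
    simp [this]
  rw [this]
  calc Q z (S ∩ T) ≤ Q w (S ∩ T) := Finset.sum_le_sum (fun i hi => h1 i
        (Finset.mem_inter.1 hi).1 (Finset.mem_inter.1 hi).2)
    _ ≤ Q w T := Q_mono w Finset.inter_subset_right

lemma Q_union (z : EuclideanSpace ℝ (Fin p)) (S T : Finset (Fin p)) :
    Q z (S ∪ T) = Q z S + Q z (T \ S) := by
  rw [Q, Q, Q, ← Finset.sum_union Finset.disjoint_sdiff, Finset.union_sdiff_self_eq_union]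

lemma Q_split (z : EuclideanSpace ℝ (Fin p)) (S T : Finset (Fin p)) :
    Q z S = Q z (S ∩ T) + Q z (S \ T) := by
  rw [Q, Q, Q, ← Finset.sum_union (Finset.disjoint_sdiff_inter S T).symm]
  congr 1
  ext i; simp; tauto

lemma Q_union_le (z : EuclideanSpace ℝ (Fin p)) (S T : Finset (Fin p)) :
    Q z (S ∪ T) ≤ Q z S + Q z T :=
  (Q_union z S T).le.trans (by gcongr; exact Q_mono z (Finset.sdiff_subset))

lemma Q_biUnion_le {M : ℕ} (z : EuclideanSpace ℝ (Fin p)) (A : Finset (Fin M))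
    (F : Fin M → Finset (Fin p)) :
    Q z (A.biUnion F) ≤ ∑ ℓ ∈ A, Q z (F ℓ) := by
  classical
  induction A using Finset.induction with
  | empty => simp [Q]
  | @insert a s hnotmem ih =>
    rw [Finset.biUnion_insert, Finset.sum_insert hnotmem]
    exact (Q_union_le z _ _).trans (by gcongr)

lemma Q_le_sq_norm (z : EuclideanSpace ℝ (Fin p)) (S : Finset (Fin p)) :
    Q z S ≤ ‖z‖^2 := by
  rw [sq_norm]; exact Q_mono z (Finset.subset_univ S)


lemma partialUnion_mono {M m : ℕ} (G : Fin M → Finset (Fin p)) (idx : Fin m → Fin M)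
    {j j' : ℕ} (h : j ≤ j') : partialUnion G idx j ⊆ partialUnion G idx j' := by
  apply Finset.biUnion_subset_biUnion_of_subset_left
  intro t ht
  simp only [Finset.mem_filter] at *
  exact ⟨ht.1, lt_of_lt_of_le ht.2 h⟩

lemma partialUnion_succ {M m : ℕ} (G : Fin M → Finset (Fin p)) (idx : Fin m → Fin M)
    {j : ℕ} (hj : j < m) :
    partialUnion G idx (j+1) = partialUnion G idx j ∪ G (idx ⟨j, hj⟩) := by
  unfold partialUnion
  rw [show (Finset.univ.filter (fun t : Fin m => (t:ℕ) < j+1)) =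
      insert ⟨j,hj⟩ (Finset.univ.filter (fun t : Fin m => (t:ℕ) < j)) by
    ext t
    simp [Nat.lt_succ_iff_lt_or_eq, Fin.ext_iff]
    omega]
  rw [Finset.biUnion_insert]
  exact Finset.union_comm _ _

lemma partialUnion_zero {M m : ℕ} (G : Fin M → Finset (Fin p)) (idx : Fin m → Fin M) :
    partialUnion G idx 0 = ∅ := by
  unfold partialUnion
  rw [show (Finset.univ.filter (fun t : Fin m => (t:ℕ) < 0)) = ∅ by ext t; simp]
  simp

section Greedy
variable {p M k : ℕ} (G : Fin M → Finset (Fin p)) (z : EuclideanSpace ℝ (Fin p))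
  (idx : Fin k → Fin M) {Sstar : Finset (Fin p)} {A : Finset (Fin M)} {kstar : ℕ}

lemma greedy_step (hg : IsGreedySelection G z idx)
    (hA : A.card ≤ kstar) (hSA : Sstar ⊆ A.biUnion G)
    {j : ℕ} (hj : j < k) :
    Q z (Sstar \ partialUnion G idx j) ≤
      kstar * Q z (G (idx ⟨j,hj⟩) \ partialUnion G idx j) := by
  set B := partialUnion G idx j with hB
  have h1 : Sstar \ B ⊆ A.biUnion (fun ℓ => G ℓ \ B) := by
    intro i hi
    rcases Finset.mem_sdiff.1 hi with ⟨hiS, hiB⟩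
    rcases Finset.mem_biUnion.1 (hSA hiS) with ⟨ℓ, hℓ, hiG⟩
    exact Finset.mem_biUnion.2 ⟨ℓ, hℓ, Finset.mem_sdiff.2 ⟨hiG, hiB⟩⟩
  calc Q z (Sstar \ B) ≤ ∑ ℓ ∈ A, Q z (G ℓ \ B) :=
        (Q_mono z h1).trans (Q_biUnion_le z A _)
    _ ≤ ∑ _ℓ ∈ A, Q z (G (idx ⟨j,hj⟩) \ B) := by
        refine Finset.sum_le_sum (fun ℓ _ => ?_)
        have hineq := hg ⟨j,hj⟩ ℓ
        have := pow_le_pow_left₀ (norm_nonneg _) hineq 2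
        rwa [sq_norm_restrict, sq_norm_restrict] at this
    _ = (A.card : ℝ) * Q z (G (idx ⟨j,hj⟩) \ B) := by
        rw [Finset.sum_const, nsmul_eq_mul]
    _ ≤ kstar * Q z (G (idx ⟨j,hj⟩) \ B) :=
        mul_le_mul_of_nonneg_right (by exact_mod_cast hA) (Q_nonneg _ _)

lemma greedy_decay (hg : IsGreedySelection G z idx) (hk1 : 1 ≤ kstar)
    (hA : A.card ≤ kstar) (hSA : Sstar ⊆ A.biUnion G) :
    ∀ j ≤ k, Q z Sstar - Q z (partialUnion G idx j) ≤
      (1 - 1/(kstar:ℝ))^j * Q z Sstar := by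
  have hk0 : (0:ℝ) < kstar := by exact_mod_cast hk1
  have hβ : 0 ≤ 1 - 1/(kstar:ℝ) := by
    have : 1/(kstar:ℝ) ≤ 1 := by
      rw [div_le_one hk0]; exact_mod_cast hk1
    linarith
  intro j
  induction j with
  | zero => intro _; rw [partialUnion_zero]; simp [Q]
  | succ j ih =>
    intro hj1
    have hj : j < k := hj1
    have ihj := ih (le_of_lt hj)
    have hsucc : Q z (partialUnion G idx (j+1)) =
        Q z (partialUnion G idx j) + Q z (G (idx ⟨j,hj⟩) \ partialUnion G idx j) := by
      rw [partialUnion_succ G idx hj, Q_union]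
    set B := partialUnion G idx j with hBdef
    set a := Q z (G (idx ⟨j,hj⟩) \ B) with hadef
    have ha : 0 ≤ a := Q_nonneg _ _
    have hstep : Q z Sstar - Q z B ≤ kstar * a := by
      have h1 := greedy_step G z idx hg hA hSA hj
      have h2 := Q_split z Sstar B
      have h3 : Q z (Sstar ∩ B) ≤ Q z B := Q_mono z Finset.inter_subset_right
      linarith
    have hR : 0 ≤ Q z Sstar := Q_nonneg _ _
    rcases le_or_gt (Q z Sstar - Q z B) 0 with hneg | hpos
    · have h4 : Q z Sstar - Q z (partialUnion G idx (j+1)) ≤ 0 := by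
        rw [hsucc]; linarith
      have h5 : 0 ≤ (1 - 1/(kstar:ℝ))^(j+1) * Q z Sstar := by positivity
      linarith
    · have hdiv : (Q z Sstar - Q z B)/kstar ≤ a := by
        rw [div_le_iff₀ hk0]; linarith
      rw [hsucc]
      calc Q z Sstar - (Q z B + a)
          ≤ (Q z Sstar - Q z B) * (1 - 1/(kstar:ℝ)) := by
            have : (Q z Sstar - Q z B) * (1 - 1/(kstar:ℝ))
                = (Q z Sstar - Q z B) - (Q z Sstar - Q z B)/kstar := by ring
            rw [this]; linarith
        _ ≤ ((1 - 1/(kstar:ℝ))^j * Q z Sstar) * (1 - 1/(kstar:ℝ)) :=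
            mul_le_mul_of_nonneg_right ihj hβ
        _ = (1 - 1/(kstar:ℝ))^(j+1) * Q z Sstar := by ring

lemma greedy_tail (hg : IsGreedySelection G z idx)
    (hA : A.card ≤ kstar) (hSA : Sstar ⊆ A.biUnion G) {ktil : ℕ} :
    ∀ j, ktil ≤ j → j ≤ k →
      ((j:ℝ) - ktil) * Q z (Sstar \ partialUnion G idx k) ≤
        kstar * (Q z (partialUnion G idx j) - Q z (partialUnion G idx ktil)) := by
  intro j hkj hjk
  induction j, hkj using Nat.le_induction with
  | base => simp
  | succ j hkj ih =>
    have hj : j < k := hjk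
    have ihj := ih (le_of_lt hj)
    have hsucc : Q z (partialUnion G idx (j+1)) =
        Q z (partialUnion G idx j) + Q z (G (idx ⟨j,hj⟩) \ partialUnion G idx j) := by
      rw [partialUnion_succ G idx hj, Q_union]
    have hstep : Q z (Sstar \ partialUnion G idx j) ≤
        kstar * Q z (G (idx ⟨j,hj⟩) \ partialUnion G idx j) :=
      greedy_step G z idx hg hA hSA hj
    have hmono : Q z (Sstar \ partialUnion G idx k) ≤ Q z (Sstar \ partialUnion G idx j) :=
      Q_mono z (Finset.sdiff_subset_sdiff le_rfl (partialUnion_mono G idx (le_of_lt hj)))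
    rw [hsucc]
    push_cast
    nlinarith [Q_nonneg z (Sstar \ partialUnion G idx k)]

lemma greedy_main (hg : IsGreedySelection G z idx) (hk1 : 1 ≤ kstar)
    (hA : A.card ≤ kstar) (hSA : Sstar ⊆ A.biUnion G) {ktil : ℕ} (hktil : ktil < k) :
    ((k:ℝ) - ktil) * Q z (Sstar \ partialUnion G idx k) ≤
      kstar * (Q z (partialUnion G idx k \ Sstar) + (1 - 1/(kstar:ℝ))^ktil * Q z Sstar) := by
  have t := greedy_tail G z idx hg hA hSA k (le_of_lt hktil) le_rfl
  have d := greedy_decay G z idx hg hk1 hA hSA ktil (le_of_lt hktil)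
  have h1 : Q z (partialUnion G idx k) ≤ Q z Sstar + Q z (partialUnion G idx k \ Sstar) := by
    have h2 := Q_split z (partialUnion G idx k) Sstar
    have h3 : Q z (partialUnion G idx k ∩ Sstar) ≤ Q z Sstar :=
      Q_mono z Finset.inter_subset_right
    linarith
  have hk0 : (0:ℝ) ≤ kstar := by positivity
  nlinarith

end Greedy


section Analysis

lemma bilin_bound {p : ℕ}
    (D : EuclideanSpace ℝ (Fin p) →L[ℝ] EuclideanSpace ℝ (Fin p) →L[ℝ] ℝ)
    (hsym : ∀ v w, D v w = D w v) {α L : ℝ} (hαL : α ≤ L)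
    (hd : ∀ v, α * ‖v‖^2 ≤ D v v ∧ D v v ≤ L * ‖v‖^2)
    (u d : EuclideanSpace ℝ (Fin p)) :
    |L * (inner ℝ u d : ℝ) - D d u| ≤ (L - α) * ‖u‖ * ‖d‖ := by
  set C : EuclideanSpace ℝ (Fin p) → EuclideanSpace ℝ (Fin p) → ℝ :=
    fun v w => L * (inner ℝ v w : ℝ) - D v w with hC
  have hCpos : ∀ v, 0 ≤ C v v := fun v => by
    have h := (hd v).2
    simp only [hC, real_inner_self_eq_norm_sq]
    linarith
  have hCle : ∀ v, C v v ≤ (L - α) * ‖v‖^2 := fun v => by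
    have h := (hd v).1
    simp only [hC, real_inner_self_eq_norm_sq]
    linarith
  have hquad : ∀ t : ℝ, 0 ≤ C d d * (t*t) + (2 * C u d) * t + C u u := by
    intro t
    have hD : D (u + t • d) (u + t • d)
        = D u u + t * D u d + t * D d u + t * (t * D d d) := by
      simp only [map_add, map_smul, ContinuousLinearMap.add_apply,
        ContinuousLinearMap.smul_apply, smul_eq_mul]
      ring
    have hI : (inner ℝ (u + t • d) (u + t • d) : ℝ)
        = (inner ℝ u u : ℝ) + 2 * (t * (inner ℝ u d : ℝ)) + t * (t * (inner ℝ d d : ℝ)) := by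
      rw [real_inner_add_add_self]
      simp only [real_inner_smul_left, real_inner_smul_right]
      try ring
    have hval : C (u + t • d) (u + t • d) = C d d * (t*t) + (2 * C u d) * t + C u u := by
      simp only [hC]
      rw [hD, hI, hsym d u]
      ring
    rw [← hval]
    exact hCpos _
  have hdisc := discrim_le_zero hquad
  rw [discrim] at hdisc
  have hsq : (C u d)^2 ≤ ((L - α) * ‖u‖ * ‖d‖)^2 := by
    nlinarith [hCpos u, hCpos d, hCle u, hCle d, mul_nonneg (norm_nonneg u) (norm_nonneg d),
      sq_nonneg (‖u‖*‖d‖)]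
  have habs : |C u d| ≤ (L - α) * ‖u‖ * ‖d‖ := by
    have h1 := Real.sqrt_le_sqrt hsq
    rwa [Real.sqrt_sq_eq_abs, Real.sqrt_sq (mul_nonneg (mul_nonneg (sub_nonneg.2 hαL) (norm_nonneg u)) (norm_nonneg d))] at h1
  have : L * (inner ℝ u d : ℝ) - D d u = C u d := by
    simp only [hC]
    rw [hsym d u]
  rwa [this]

lemma contraction {p M : ℕ} (G : Fin M → Finset (Fin p)) (K : ℕ) {α L : ℝ}
    (hα : 0 < α) (hαL : α ≤ L) {f : EuclideanSpace ℝ (Fin p) → ℝ}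
    (hf : RSCRSS G K α L f) (a b : EuclideanSpace ℝ (Fin p))
    (hseg : ∀ s : ℝ, 0 ≤ s → s ≤ 1 → GroupSparse G K (a + s • (b - a))) :
    ‖(b - a) - (1 / L) • (gradient f b - gradient f a)‖ ≤ (1 - α / L) * ‖b - a‖ := by
  have hL : 0 < L := lt_of_lt_of_le hα hαL
  set d := b - a with hd
  set e := d - (1 / L) • (gradient f b - gradient f a) with he
  set γ : ℝ → EuclideanSpace ℝ (Fin p) := fun s => a + s • d with hγ
  have hγ0 : γ 0 = a := by simp [hγ]
  have hγ1 : γ 1 = b := by simp [hγ, hd]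
  have hC2 : ContDiff ℝ 2 f := hf.1
  have hC1 : ContDiff ℝ 1 (fderiv ℝ f) := hC2.fderiv_right (by norm_num)
  have hγd : ∀ s : ℝ, HasDerivAt γ d s := fun s => by
    simpa [hγ] using ((hasDerivAt_id s).smul_const d).const_add a
  have hγc : Continuous γ := by
    apply continuous_const.add (continuous_id.smul continuous_const)
  have hphider : ∀ (u : EuclideanSpace ℝ (Fin p)) (s : ℝ),
      HasDerivAt (fun s : ℝ => fderiv ℝ f (γ s) u)
        (fderiv ℝ (fderiv ℝ f) (γ s) d u) s := by
    intro u s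
    have h1 : HasFDerivAt (fderiv ℝ f) (fderiv ℝ (fderiv ℝ f) (γ s)) (γ s) :=
      (hC1.differentiable one_ne_zero (γ s)).hasFDerivAt
    have h2 : HasDerivAt (fun s => fderiv ℝ f (γ s)) (fderiv ℝ (fderiv ℝ f) (γ s) d) s :=
      h1.comp_hasDerivAt s (hγd s)
    have h3 := h2.clm_apply (hasDerivAt_const s u)
    simpa using h3
  have hcont : ∀ u : EuclideanSpace ℝ (Fin p),
      Continuous (fun s : ℝ => fderiv ℝ (fderiv ℝ f) (γ s) d u) := by
    intro u
    have hF2 : Continuous (fderiv ℝ (fderiv ℝ f)) := hC1.continuous_fderiv one_ne_zero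
    exact (((hF2.comp hγc).clm_apply continuous_const).clm_apply continuous_const)
  have hFTC : ∀ u : EuclideanSpace ℝ (Fin p),
      (∫ s in (0:ℝ)..1, fderiv ℝ (fderiv ℝ f) (γ s) d u)
        = fderiv ℝ f b u - fderiv ℝ f a u := by
    intro u
    have := intervalIntegral.integral_eq_sub_of_hasDerivAt
      (f := fun s : ℝ => fderiv ℝ f (γ s) u)
      (fun s _ => hphider u s) (((hcont u)).intervalIntegrable 0 1)
    rw [this]
    simp only [hγ0, hγ1]
  have hgrad : ∀ (x u : EuclideanSpace ℝ (Fin p)),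
      (inner ℝ u (gradient f x) : ℝ) = fderiv ℝ f x u := by
    intro x u
    rw [real_inner_comm, gradient]
    exact InnerProductSpace.toDual_symm_apply
  have hmain : ∀ u : EuclideanSpace ℝ (Fin p),
      (inner ℝ u e : ℝ) ≤ (1 - α/L) * ‖u‖ * ‖d‖ := by
    intro u
    have h1 : (inner ℝ u e : ℝ) = (inner ℝ u d : ℝ)
        - (1/L) * (fderiv ℝ f b u - fderiv ℝ f a u) := by
      simp only [he, inner_sub_right, real_inner_smul_right, hgrad]
      try ring
    rw [h1, ← hFTC u]
    have hInt : (inner ℝ u d : ℝ)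
          - (1/L) * ∫ s in (0:ℝ)..1, fderiv ℝ (fderiv ℝ f) (γ s) d u
        = ∫ s in (0:ℝ)..1,
            ((inner ℝ u d : ℝ) - (1/L) * fderiv ℝ (fderiv ℝ f) (γ s) d u) := by
      rw [intervalIntegral.integral_sub (g := fun s => (1/L) * fderiv ℝ (fderiv ℝ f) (γ s) d u) intervalIntegrable_const
        ((continuous_const.mul (hcont u)).intervalIntegrable 0 1),
        intervalIntegral.integral_const_mul, intervalIntegral.integral_const]
      simp
    rw [hInt]
    have hbound : ∀ s ∈ Set.uIoc (0:ℝ) 1,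
        ‖(inner ℝ u d : ℝ) - (1/L) * fderiv ℝ (fderiv ℝ f) (γ s) d u‖
          ≤ (1 - α/L) * ‖u‖ * ‖d‖ := by
      intro s hs
      rw [Set.uIoc_of_le (by norm_num : (0:ℝ) ≤ 1)] at hs
      have hsparse : GroupSparse G K (γ s) := hseg s (le_of_lt hs.1) hs.2
      have hsym : ∀ v w : EuclideanSpace ℝ (Fin p),
          fderiv ℝ (fderiv ℝ f) (γ s) v w = fderiv ℝ (fderiv ℝ f) (γ s) w v :=
        (hC2.contDiffAt).isSymmSndFDerivAt (by simp)
      have hdiag : ∀ v : EuclideanSpace ℝ (Fin p),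
          α * ‖v‖^2 ≤ fderiv ℝ (fderiv ℝ f) (γ s) v v ∧
            fderiv ℝ (fderiv ℝ f) (γ s) v v ≤ L * ‖v‖^2 := by
        intro v
        have h2 := hf.2 (γ s) hsparse v
        rw [iteratedFDeriv_two_apply] at h2
        simpa using h2
      have hb := bilin_bound (fderiv ℝ (fderiv ℝ f) (γ s)) hsym hαL hdiag u d
      have heq : (inner ℝ u d : ℝ) - (1/L) * fderiv ℝ (fderiv ℝ f) (γ s) d u
          = (1/L) * (L * (inner ℝ u d : ℝ) - fderiv ℝ (fderiv ℝ f) (γ s) d u) := by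
        field_simp
        try ring
      rw [Real.norm_eq_abs, heq, abs_mul, abs_of_pos (one_div_pos.2 hL)]
      calc (1/L) * |L * (inner ℝ u d : ℝ) - fderiv ℝ (fderiv ℝ f) (γ s) d u|
          ≤ (1/L) * ((L - α) * ‖u‖ * ‖d‖) := by
            apply mul_le_mul_of_nonneg_left hb (le_of_lt (one_div_pos.2 hL))
        _ = (1 - α/L) * ‖u‖ * ‖d‖ := by
            field_simp
            try ring
    calc (∫ s in (0:ℝ)..1,
            ((inner ℝ u d : ℝ) - (1/L) * fderiv ℝ (fderiv ℝ f) (γ s) d u))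
        ≤ ‖∫ s in (0:ℝ)..1,
            ((inner ℝ u d : ℝ) - (1/L) * fderiv ℝ (fderiv ℝ f) (γ s) d u)‖ :=
          le_abs_self _
      _ ≤ ((1 - α/L) * ‖u‖ * ‖d‖) * |1 - 0| :=
          intervalIntegral.norm_integral_le_of_norm_le_const hbound
      _ = (1 - α/L) * ‖u‖ * ‖d‖ := by norm_num
  rcases eq_or_lt_of_le (norm_nonneg e) with h0 | h0
  · rw [← h0]
    have h2 : α / L ≤ 1 := by
      rw [div_le_one hL]
      exact hαL
    exact mul_nonneg (by linarith) (norm_nonneg _)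
  · have hm := hmain e
    rw [real_inner_self_eq_norm_sq] at hm
    nlinarith

end Analysis


lemma sqrt_add_le' {x y : ℝ} (hx : 0 ≤ x) (hy : 0 ≤ y) :
    Real.sqrt (x + y) ≤ Real.sqrt x + Real.sqrt y := by
  have h : x + y ≤ (Real.sqrt x + Real.sqrt y)^2 := by
    rw [add_sq, Real.sq_sqrt hx, Real.sq_sqrt hy]
    nlinarith [Real.sqrt_nonneg x, Real.sqrt_nonneg y]
  calc Real.sqrt (x+y) ≤ Real.sqrt ((Real.sqrt x + Real.sqrt y)^2) := Real.sqrt_le_sqrt h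
    _ = _ := Real.sqrt_sq (by positivity)

end S9


set_option maxHeartbeats 1000000 in
open S9 in
/-- one step of IHT with the greedy projection, under RSC/RSS of order
`2k + k*`: for every `1 ≤ k̃ < k`,
`‖w_{t+1} − w*‖ ≤ (1 + √(k*/(k − k̃)))·[(1 − α/L)‖w_t − w*‖ + (1/L)‖(∇f(w*))_{S_{t+1}∪S*}‖]
 + e^{−k̃/(2k*)}·√(k*/(k − k̃))·‖(g_t)_{S*}‖`. -/
theorem stmt_9 (p M : ℕ) (hp : 1 ≤ p) (hM : 1 ≤ M)
    (G : Fin M → Finset (Fin p)) (hcov : ∀ i : Fin p, ∃ j : Fin M, i ∈ G j)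
    (f : EuclideanSpace ℝ (Fin p) → ℝ)
    (kstar k : ℕ) (hkstar : 1 ≤ kstar)
    (α L : ℝ) (hα : 0 < α) (hαL : α ≤ L)
    (hf : RSCRSS G (2 * k + kstar) α L f)
    (wstar : EuclideanSpace ℝ (Fin p)) (hwstar : GroupSparse G kstar wstar)
    (wt : EuclideanSpace ℝ (Fin p)) (hwt : GroupSparse G k wt)
    (gt : EuclideanSpace ℝ (Fin p)) (hgt : gt = wt - (1 / L) • gradient f wt)
    (idx : Fin k → Fin M) (hgreedy : IsGreedySelection G gt idx)
    (wt1 : EuclideanSpace ℝ (Fin p)) (hwt1 : wt1 = restrict gt (partialUnion G idx k))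
    (ktil : ℕ) (h1 : 1 ≤ ktil) (h2 : ktil < k) :
    ‖wt1 - wstar‖ ≤
      (1 + Real.sqrt ((kstar : ℝ) / ((k : ℝ) - (ktil : ℝ)))) *
        ((1 - α / L) * ‖wt - wstar‖ +
          (1 / L) * ‖restrict (gradient f wstar) (suppF wt1 ∪ suppF wstar)‖) +
      Real.exp (-(ktil : ℝ) / (2 * (kstar : ℝ))) *
        Real.sqrt ((kstar : ℝ) / ((k : ℝ) - (ktil : ℝ))) *
        ‖restrict gt (suppF wstar)‖ := by
  classical
  have hL : 0 < L := lt_of_lt_of_le hα hαL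
  obtain ⟨Astar, hAc, hAs⟩ := hwstar
  obtain ⟨At, hAtc, hAts⟩ := hwt
  set Sstar := suppF wstar with hSstar
  set B := partialUnion G idx k with hB
  set T' := suppF wt1 ∪ suppF wstar with hT'
  set h := gt - wstar with hh
  have hhi : ∀ i, h i = gt i - wstar i := fun i => rfl
  have hws0 : ∀ i : Fin p, i ∉ Sstar → wstar i = 0 := by
    intro i hi
    by_contra hne
    exact hi (Finset.mem_filter.2 ⟨Finset.mem_univ i, hne⟩)
  have hgt0 : ∀ i : Fin p, i ∈ B → i ∉ suppF wt1 → gt i = 0 := by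
    intro i hiB hi
    have h1 : wt1 i = 0 := by
      by_contra hne
      exact hi (Finset.mem_filter.2 ⟨Finset.mem_univ i, hne⟩)
    rw [hwt1] at h1
    have h2 : _root_.restrict gt B i = gt i := by simp [_root_.restrict, hiB]
    rw [← h2]
    exact h1
  -- Step A: vector identity
  have hid : wt1 - wstar = _root_.restrict h (B ∪ Sstar) - _root_.restrict gt (Sstar \ B) := by
    ext i
    show wt1 i - wstar i = _root_.restrict h (B ∪ Sstar) i - _root_.restrict gt (Sstar \ B) i
    by_cases hiB : i ∈ B
    · have h1 : wt1 i = gt i := by rw [hwt1]; simp [_root_.restrict, hiB]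
      simp [_root_.restrict, Finset.mem_union, Finset.mem_sdiff, hiB, h1, hhi]
    · by_cases hiS : i ∈ Sstar
      · have h1 : wt1 i = 0 := by rw [hwt1]; simp [_root_.restrict, hiB]
        simp only [_root_.restrict, Finset.mem_union, Finset.mem_sdiff, hiB, hiS, h1, hhi]
        simp
      · have h1 : wt1 i = 0 := by rw [hwt1]; simp [_root_.restrict, hiB]
        have h2 : wstar i = 0 := hws0 i hiS
        simp [_root_.restrict, Finset.mem_union, Finset.mem_sdiff, hiB, hiS, h1, h2]
  -- Step B: norm of restriction to B ∪ Sstar bounded by restriction to T'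
  have hzero : ∀ i : Fin p, i ∈ B → i ∉ T' → h i = 0 := by
    intro i hiB hiT
    rw [hT', Finset.mem_union] at hiT
    push_neg at hiT
    rw [hhi, hgt0 i hiB hiT.1, hws0 i hiT.2, sub_zero]
  have hBle : ‖_root_.restrict h (B ∪ Sstar)‖ ≤ ‖_root_.restrict h T'‖ := by
    rw [norm_restrict, norm_restrict]
    apply Real.sqrt_le_sqrt
    apply Q_le_of
    · intro i hi hiT
      rcases Finset.mem_union.1 hi with hiB | hiS
      · exact hzero i hiB hiT
      · exact absurd (Finset.mem_union.2 (Or.inr hiS)) (hT' ▸ hiT)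
    · intro i _ _
      exact le_rfl
  -- Q gt (B \ Sstar) ≤ Q h T'
  have hQBS : Q gt (B \ Sstar) ≤ Q h T' := by
    apply Q_le_of
    · intro i hi hiT
      have hiB := (Finset.mem_sdiff.1 hi).1
      have hiS := (Finset.mem_sdiff.1 hi).2
      rw [hT', Finset.mem_union] at hiT
      push_neg at hiT
      exact hgt0 i hiB hiT.1
    · intro i hi _
      have hiS := (Finset.mem_sdiff.1 hi).2
      rw [hhi, hws0 i hiS, sub_zero]
  -- greedy bound
  have hρpos : (0:ℝ) < (k:ℝ) - (ktil:ℝ) := by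
    have : (ktil:ℝ) < (k:ℝ) := by exact_mod_cast h2
    linarith
  set ρ := (kstar:ℝ)/((k:ℝ)-(ktil:ℝ)) with hρ
  have hρ0 : (0:ℝ) ≤ ρ := by positivity
  have gm := greedy_main G gt idx hgreedy hkstar hAc hAs h2
  have hQmain : Q gt (Sstar \ B) ≤ ρ * Q h T'
      + ρ * ((1-1/(kstar:ℝ))^ktil * Q gt Sstar) := by
    have h3 : Q gt (Sstar \ B) ≤ ρ * (Q gt (B \ Sstar)
        + (1-1/(kstar:ℝ))^ktil * Q gt Sstar) := by
      rw [hρ, div_mul_eq_mul_div, le_div_iff₀ hρpos]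
      nlinarith [gm]
    have h4 : ρ * (Q gt (B \ Sstar) + (1-1/(kstar:ℝ))^ktil * Q gt Sstar)
        ≤ ρ * Q h T' + ρ * ((1-1/(kstar:ℝ))^ktil * Q gt Sstar) := by
      rw [mul_add]
      exact add_le_add (mul_le_mul_of_nonneg_left hQBS hρ0) le_rfl
    linarith
  -- exp bound
  have hkpos : (0:ℝ) < kstar := by exact_mod_cast hkstar
  have hβ0 : (0:ℝ) ≤ 1 - 1/(kstar:ℝ) := by
    have : 1/(kstar:ℝ) ≤ 1 := by
      rw [div_le_one hkpos]
      exact_mod_cast hkstar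
    linarith
  have hpow : (1-1/(kstar:ℝ))^ktil ≤ Real.exp (-(ktil:ℝ)/(kstar:ℝ)) := by
    have hexp1 : 1 - 1/(kstar:ℝ) ≤ Real.exp (-(1/(kstar:ℝ))) := by
      have := Real.add_one_le_exp (-(1/(kstar:ℝ)))
      linarith
    calc (1-1/(kstar:ℝ))^ktil ≤ (Real.exp (-(1/(kstar:ℝ))))^ktil :=
          pow_le_pow_left₀ hβ0 hexp1 ktil
      _ = Real.exp ((ktil:ℝ) * (-(1/(kstar:ℝ)))) := (Real.exp_nat_mul _ ktil).symm
      _ = Real.exp (-(ktil:ℝ)/(kstar:ℝ)) := by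
          rw [show (ktil:ℝ) * (-(1/(kstar:ℝ))) = -(ktil:ℝ)/(kstar:ℝ) by ring]
  have hsqpow : Real.sqrt ((1-1/(kstar:ℝ))^ktil) ≤ Real.exp (-(ktil:ℝ)/(2*(kstar:ℝ))) := by
    calc Real.sqrt ((1-1/(kstar:ℝ))^ktil) ≤ Real.sqrt (Real.exp (-(ktil:ℝ)/(kstar:ℝ))) :=
          Real.sqrt_le_sqrt hpow
      _ = Real.exp ((-(ktil:ℝ)/(kstar:ℝ))/2) := (Real.exp_half _).symm
      _ = Real.exp (-(ktil:ℝ)/(2*(kstar:ℝ))) := by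
          rw [show (-(ktil:ℝ)/(kstar:ℝ))/2 = -(ktil:ℝ)/(2*(kstar:ℝ)) by ring]
  -- Step C
  have hC : ‖_root_.restrict gt (Sstar \ B)‖ ≤ Real.sqrt ρ * ‖_root_.restrict h T'‖
      + Real.exp (-(ktil:ℝ)/(2*(kstar:ℝ))) * Real.sqrt ρ * ‖_root_.restrict gt Sstar‖ := by
    rw [norm_restrict, norm_restrict, norm_restrict]
    calc Real.sqrt (Q gt (Sstar \ B))
        ≤ Real.sqrt (ρ * Q h T' + ρ * ((1-1/(kstar:ℝ))^ktil * Q gt Sstar)) :=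
          Real.sqrt_le_sqrt hQmain
      _ ≤ Real.sqrt (ρ * Q h T') + Real.sqrt (ρ * ((1-1/(kstar:ℝ))^ktil * Q gt Sstar)) :=
          sqrt_add_le' (mul_nonneg hρ0 (Q_nonneg _ _)) (mul_nonneg hρ0 (mul_nonneg (pow_nonneg hβ0 _) (Q_nonneg _ _)))
      _ = Real.sqrt ρ * Real.sqrt (Q h T')
          + Real.sqrt ρ * (Real.sqrt ((1-1/(kstar:ℝ))^ktil) * Real.sqrt (Q gt Sstar)) := by
          rw [Real.sqrt_mul hρ0, Real.sqrt_mul hρ0, Real.sqrt_mul (by positivity)]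
      _ ≤ Real.sqrt ρ * Real.sqrt (Q h T')
          + Real.sqrt ρ * (Real.exp (-(ktil:ℝ)/(2*(kstar:ℝ))) * Real.sqrt (Q gt Sstar)) := by
          refine add_le_add le_rfl (mul_le_mul_of_nonneg_left ?_ (Real.sqrt_nonneg _))
          exact mul_le_mul_of_nonneg_right hsqpow (Real.sqrt_nonneg _)
      _ = Real.sqrt ρ * Real.sqrt (Q h T')
          + Real.exp (-(ktil:ℝ)/(2*(kstar:ℝ))) * Real.sqrt ρ * Real.sqrt (Q gt Sstar) := by
          ring
  -- Step D: contraction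
  have hseg : ∀ s : ℝ, 0 ≤ s → s ≤ 1 → GroupSparse G (2*k+kstar) (wstar + s • (wt - wstar)) := by
    intro s _ _
    refine ⟨Astar ∪ At, ?_, ?_⟩
    · calc (Astar ∪ At).card ≤ Astar.card + At.card := Finset.card_union_le _ _
        _ ≤ kstar + k := add_le_add hAc hAtc
        _ ≤ 2*k + kstar := by omega
    · intro i hi
      have hne : wstar i ≠ 0 ∨ wt i ≠ 0 := by
        by_contra hcon
        push_neg at hcon
        have hz : (wstar + s • (wt - wstar)) i = 0 := by
          show wstar i + s * (wt i - wstar i) = 0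
          rw [hcon.1, hcon.2]
          ring
        exact (Finset.mem_filter.1 hi).2 hz
      rcases hne with hne | hne
      · have : i ∈ Astar.biUnion G :=
          hAs (Finset.mem_filter.2 ⟨Finset.mem_univ i, hne⟩)
        exact Finset.biUnion_subset_biUnion_of_subset_left G Finset.subset_union_left this
      · have : i ∈ At.biUnion G :=
          hAts (Finset.mem_filter.2 ⟨Finset.mem_univ i, hne⟩)
        exact Finset.biUnion_subset_biUnion_of_subset_left G Finset.subset_union_right this
  have hcontr : ‖(wt - wstar) - (1 / L) • (gradient f wt - gradient f wstar)‖
      ≤ (1 - α / L) * ‖wt - wstar‖ :=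
    contraction G (2*k+kstar) hα hαL hf wstar wt hseg
  set e' := (wt - wstar) - (1 / L) • (gradient f wt - gradient f wstar) with he'
  have hdecomp : _root_.restrict h T' = _root_.restrict e' T' - (1/L) • _root_.restrict (gradient f wstar) T' := by
    ext i
    show _root_.restrict h T' i = _root_.restrict e' T' i - (1/L) * _root_.restrict (gradient f wstar) T' i
    by_cases hi : i ∈ T'
    · have hgi : gt i = wt i - (1/L) * (gradient f wt i) := by
        rw [hgt]; rfl
      have hE : e' i = (wt i - wstar i) - (1/L) * (gradient f wt i - gradient f wstar i) := rfl
      have hH : h i = gt i - wstar i := rfl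
      simp only [_root_.restrict, if_pos hi]
      rw [hH, hE, hgi]
      ring
    · simp [_root_.restrict, hi]
  have hD : ‖_root_.restrict h T'‖ ≤ (1 - α / L) * ‖wt - wstar‖
      + (1/L) * ‖_root_.restrict (gradient f wstar) T'‖ := by
    rw [hdecomp]
    calc ‖_root_.restrict e' T' - (1/L) • _root_.restrict (gradient f wstar) T'‖
        ≤ ‖_root_.restrict e' T'‖ + ‖(1/L) • _root_.restrict (gradient f wstar) T'‖ := norm_sub_le _ _
      _ ≤ (1 - α / L) * ‖wt - wstar‖ + (1/L) * ‖_root_.restrict (gradient f wstar) T'‖ := by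
          apply add_le_add
          · refine le_trans ?_ hcontr
            rw [norm_restrict]
            calc Real.sqrt (Q e' T') ≤ Real.sqrt (‖e'‖^2) :=
                  Real.sqrt_le_sqrt (Q_le_sq_norm e' T')
              _ = ‖e'‖ := Real.sqrt_sq (norm_nonneg _)
          · rw [norm_smul, Real.norm_eq_abs, abs_of_pos (one_div_pos.2 hL)]
  -- final assembly
  have hstart : ‖wt1 - wstar‖ ≤ ‖_root_.restrict h (B ∪ Sstar)‖ + ‖_root_.restrict gt (Sstar \ B)‖ := by
    rw [hid]
    exact norm_sub_le _ _
  have hsρ0 : 0 ≤ Real.sqrt ρ := Real.sqrt_nonneg _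
  have hee0 : 0 ≤ Real.exp (-(ktil:ℝ)/(2*(kstar:ℝ))) := Real.exp_nonneg _
  have hNS0 : 0 ≤ ‖_root_.restrict gt Sstar‖ := norm_nonneg _
  have hN1D : ‖_root_.restrict h T'‖ ≤ (1 - α / L) * ‖wt - wstar‖
      + (1/L) * ‖_root_.restrict (gradient f wstar) T'‖ := hD
  have hmul := mul_le_mul_of_nonneg_left hN1D hsρ0
  have hexpand : (1 + Real.sqrt ρ) * ((1 - α / L) * ‖wt - wstar‖
      + (1/L) * ‖_root_.restrict (gradient f wstar) T'‖)
      = ((1 - α / L) * ‖wt - wstar‖ + (1/L) * ‖_root_.restrict (gradient f wstar) T'‖)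
        + Real.sqrt ρ * ((1 - α / L) * ‖wt - wstar‖
          + (1/L) * ‖_root_.restrict (gradient f wstar) T'‖) := by ring
  calc ‖wt1 - wstar‖ ≤ ‖_root_.restrict h (B ∪ Sstar)‖ + ‖_root_.restrict gt (Sstar \ B)‖ := hstart
    _ ≤ (1 + Real.sqrt ρ) * ((1 - α / L) * ‖wt - wstar‖
          + (1/L) * ‖_root_.restrict (gradient f wstar) T'‖)
        + Real.exp (-(ktil:ℝ)/(2*(kstar:ℝ))) * Real.sqrt ρ * ‖_root_.restrict gt Sstar‖ := by
      rw [hexpand]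
      linarith [hBle, hC, hN1D, hmul]
end
end
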